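/- arXiv:0812.2734 — 7 statements merged into one kernel-verified Lean document; each statement's English description precedes it below -/
import Mathlib

section
/- In a chordal graph, every minimal separator is a clique. -/
open SimpleGraph

variable {V : Type*}

/-- A graph is chordal if it contains no induced cycle of length at least four. -/
def IsChordal (G : SimpleGraph V) : Prop :=
  ∀ n : ℕ, 4 ≤ n → IsEmpty (SimpleGraph.cycleGraph n ↪g G)

/-- `S` separates `u` from `v`: every walk from `u` to `v` meets `S`, and `u, v ∉ S`. -/
def IsSeparator (G : SimpleGraph V) (u v : V) (S : Set V) : Prop :=
  u ∉ S ∧ v ∉ S ∧ ∀ p : G.Walk u v, ∃ x ∈ p.support, x ∈ S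

/-- A `{u,v}`-separator: a separator of `u,v` minimal with this property. -/
def IsMinUVSeparator (G : SimpleGraph V) (u v : V) (S : Set V) : Prop :=
  IsSeparator G u v S ∧ ∀ T, T ⊂ S → ¬ IsSeparator G u v T

/-- A minimal separator: a `{u,v}`-separator for some non-adjacent pair `u ≠ v`. -/
def IsMinimalSeparator (G : SimpleGraph V) (S : Set V) : Prop :=
  ∃ u v, u ≠ v ∧ ¬ G.Adj u v ∧ IsMinUVSeparator G u v S

/-- A maximal clique. -/
def IsMaxClique (G : SimpleGraph V) (Q : Set V) : Prop :=
  G.IsClique Q ∧ ∀ R, G.IsClique R → Q ⊆ R → Q = R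

abbrev MaxClique (G : SimpleGraph V) := {Q : Set V // IsMaxClique G Q}

/-- A clique tree of `G`: a tree on the maximal cliques of `G` such that for every
vertex `v` the maximal cliques containing `v` induce a (nonempty connected) subtree. -/
structure CliqueTree (G : SimpleGraph V) where
  tree : SimpleGraph (MaxClique G)
  isTree : tree.IsTree
  subtree : ∀ v : V, ((tree.induce {Q : MaxClique G | v ∈ Q.1})).Connected

/-- An asteroidal triple: three pairwise non-adjacent vertices such that any two are
joined by a path avoiding the closed neighborhood of the third. -/
def IsAsteroidalTriple (G : SimpleGraph V) (a b c : V) : Prop :=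
  a ≠ b ∧ b ≠ c ∧ a ≠ c ∧ ¬ G.Adj a b ∧ ¬ G.Adj b c ∧ ¬ G.Adj a c ∧
  (∃ p : G.Walk a b, ∀ x ∈ p.support, x ≠ c ∧ ¬ G.Adj c x) ∧
  (∃ p : G.Walk b c, ∀ x ∈ p.support, x ≠ a ∧ ¬ G.Adj a x) ∧
  (∃ p : G.Walk a c, ∀ x ∈ p.support, x ≠ b ∧ ¬ G.Adj b x)

namespace ChordalAux

variable {G : SimpleGraph V}



variable {G : SimpleGraph V}

lemma length_drop {u v : V} (p : G.Walk u v) (n : ℕ) : (p.drop n).length = p.length - n := by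
  induction p generalizing n with
  | nil => simp [SimpleGraph.Walk.drop]
  | cons h q ih =>
    cases n with
    | zero => simp [SimpleGraph.Walk.drop]
    | succ n => simp [SimpleGraph.Walk.drop, ih]

lemma support_drop_subset {u v : V} (p : G.Walk u v) (n : ℕ) :
    (p.drop n).support ⊆ p.support := by
  induction p generalizing n with
  | nil => simp [SimpleGraph.Walk.drop, SimpleGraph.Walk.getVert_of_length_le]
  | cons h q ih =>
    cases n with
    | zero => simp [SimpleGraph.Walk.drop]
    | succ n =>
      simp only [SimpleGraph.Walk.drop, Walk.support_copy, Walk.support_cons]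
      exact fun z hz => List.mem_cons_of_mem _ (ih n hz)

lemma getVert_mem_support' {u v : V} (p : G.Walk u v) {i : ℕ} (hi : i ≤ p.length) :
    p.getVert i ∈ p.support :=
  Walk.mem_support_iff_exists_getVert.mpr ⟨i, rfl, hi⟩

lemma getVert_injOn {u v : V} {p : G.Walk u v} (hp : p.IsPath) :
    ∀ i ≤ p.length, ∀ j ≤ p.length, p.getVert i = p.getVert j → i = j := by
  induction p with
  | nil => intro i hi j hj _; simp at hi hj; omega
  | cons h q ih =>
    intro i hi j hj hij
    rw [Walk.isPath_def, Walk.support_cons, List.nodup_cons] at hp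
    have hq : q.IsPath := by rw [Walk.isPath_def]; exact hp.2
    cases i with
    | zero =>
      cases j with
      | zero => rfl
      | succ j =>
        exfalso
        rw [Walk.getVert_zero, Walk.getVert_cons_succ] at hij
        exact hp.1 (hij ▸ getVert_mem_support' q (by simpa using hj))
    | succ i =>
      cases j with
      | zero =>
        exfalso
        rw [Walk.getVert_zero, Walk.getVert_cons_succ] at hij
        exact hp.1 (hij ▸ getVert_mem_support' q (by simpa using hi))
      | succ j =>
        rw [Walk.getVert_cons_succ, Walk.getVert_cons_succ] at hij
        have := ih hq i (by simpa using hi) j (by simpa using hj) hij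
        omega

/-- take the first `i` steps of a walk -/
noncomputable def wtake {a b : V} (p : G.Walk a b) (i : ℕ) (hi : i ≤ p.length) :
    G.Walk a (p.getVert i) :=
  ((p.reverse.drop (p.length - i)).reverse).copy (by simp)
    (by rw [Walk.getVert_reverse]; congr 1; omega)

lemma length_wtake {a b : V} (p : G.Walk a b) (i : ℕ) (hi : i ≤ p.length) :
    (wtake p i hi).length = i := by
  simp [wtake, length_drop]; omega

lemma support_wtake_subset {a b : V} (p : G.Walk a b) (i : ℕ) (hi : i ≤ p.length) :
    (wtake p i hi).support ⊆ p.support := by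
  intro z hz
  simp only [wtake, Walk.support_copy, Walk.support_reverse, List.mem_reverse] at hz
  have := support_drop_subset p.reverse (p.length - i) hz
  rwa [Walk.support_reverse, List.mem_reverse] at this

lemma chord_shortcut {a b : V} (p : G.Walk a b) {i j : ℕ} (hij : i + 1 < j)
    (hj : j ≤ p.length) (h : G.Adj (p.getVert i) (p.getVert j)) :
    ∃ q : G.Walk a b, q.length < p.length ∧ ∀ z ∈ q.support, z ∈ p.support := by
  refine ⟨(wtake p i (by omega)).append (Walk.cons h (p.drop j)), ?_, ?_⟩
  · rw [Walk.length_append, length_wtake, Walk.length_cons, length_drop]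
    omega
  · intro z hz
    rw [Walk.mem_support_append_iff] at hz
    rcases hz with hz | hz
    · exact support_wtake_subset p i (by omega) hz
    · rw [Walk.support_cons, List.mem_cons] at hz
      rcases hz with rfl | hz
      · exact getVert_mem_support' p (by omega)
      · exact support_drop_subset p j hz

lemma cycAdj {n : ℕ} (hn : 4 ≤ n) (i j : Fin n) :
    (cycleGraph n).Adj i j ↔
      (j.val = i.val + 1 ∨ i.val = j.val + 1 ∨ (i.val = 0 ∧ j.val = n - 1) ∨
        (j.val = 0 ∧ i.val = n - 1)) := by
  obtain ⟨m, rfl⟩ : ∃ m, n = m + 2 := ⟨n - 2, by omega⟩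
  rw [cycleGraph_adj]
  have hi := i.isLt
  have hj := j.isLt
  have h1 : ∀ a b : Fin (m + 2), a - b = 1 ↔ (a.val + (m + 2 - b.val)) % (m + 2) = 1 := by
    intro a b
    rw [Fin.ext_iff, Fin.sub_def, Fin.val_one]
    simp only [Nat.add_comm]
  rw [h1, h1]
  have e1 : (i.val + (m + 2 - j.val)) % (m + 2) = 1 ↔
      (i.val + (m + 2 - j.val) = 1 ∨ i.val + (m + 2 - j.val) = m + 3) := by
    rcases Nat.lt_or_ge (i.val + (m + 2 - j.val)) (m + 2) with h | h
    · rw [Nat.mod_eq_of_lt h]; omega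
    · rw [Nat.mod_eq_sub_mod h, Nat.mod_eq_of_lt (by omega)]; omega
  have e2 : (j.val + (m + 2 - i.val)) % (m + 2) = 1 ↔
      (j.val + (m + 2 - i.val) = 1 ∨ j.val + (m + 2 - i.val) = m + 3) := by
    rcases Nat.lt_or_ge (j.val + (m + 2 - i.val)) (m + 2) with h | h
    · rw [Nat.mod_eq_of_lt h]; omega
    · rw [Nat.mod_eq_sub_mod h, Nat.mod_eq_of_lt (by omega)]; omega
  rw [e1, e2]
  omega

/-- vertices reachable from `u` by a walk avoiding `S` -/
def reachSet (G : SimpleGraph V) (u : V) (S : Set V) : Set V :=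
  {w | ∃ q : G.Walk u w, ∀ z ∈ q.support, z ∉ S}

lemma reachSet_not_mem {u : V} {S : Set V} {w : V} (h : w ∈ reachSet G u S) : w ∉ S := by
  obtain ⟨q, hq⟩ := h
  exact hq w q.end_mem_support

lemma self_mem_reachSet {u : V} {S : Set V} (h : u ∉ S) : u ∈ reachSet G u S :=
  ⟨Walk.nil, by simpa using h⟩

lemma support_subset_reachSet [DecidableEq V] {u w : V} {S : Set V} (q : G.Walk u w)
    (hq : ∀ z ∈ q.support, z ∉ S) : ∀ z ∈ q.support, z ∈ reachSet G u S := by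
  intro z hz
  exact ⟨q.takeUntil z hz, fun a ha => hq a (q.support_takeUntil_subset hz ha)⟩

lemma reachSet_adj {u : V} {S : Set V} {a b : V} (ha : a ∈ reachSet G u S)
    (hab : G.Adj a b) (hb : b ∉ S) : b ∈ reachSet G u S := by
  obtain ⟨q, hq⟩ := ha
  refine ⟨q.concat hab, fun z hz => ?_⟩
  rw [Walk.support_concat] at hz
  simp only [List.concat_eq_append, List.mem_append, List.mem_singleton] at hz
  rcases hz with hz | rfl
  · exact hq z hz
  · exact hb

lemma reachSet_connect [DecidableEq V] {u : V} {S : Set V} {a b : V}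
    (ha : a ∈ reachSet G u S) (hb : b ∈ reachSet G u S) :
    ∃ w : G.Walk a b, ∀ z ∈ w.support, z ∈ reachSet G u S := by
  obtain ⟨qa, hqa⟩ := ha
  obtain ⟨qb, hqb⟩ := hb
  refine ⟨qa.reverse.append qb, fun z hz => ?_⟩
  rw [Walk.mem_support_append_iff] at hz
  rcases hz with hz | hz
  · rw [Walk.support_reverse, List.mem_reverse] at hz
    exact support_subset_reachSet qa hqa z hz
  · exact support_subset_reachSet qb hqb z hz

lemma exists_nbr_in_reachSet {u v x : V} {S : Set V} (p : G.Walk u v) (hu : u ∉ S)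
    (hv : v ∉ reachSet G u S) (hp : ∀ z ∈ p.support, z ∈ S → z = x) :
    ∃ a ∈ reachSet G u S, G.Adj a x := by
  obtain ⟨d, hd, hd1, hd2⟩ := p.exists_boundary_dart (reachSet G u S)
    (self_mem_reachSet hu) hv
  have hsnd : d.snd ∈ S := by
    by_contra hns
    exact hd2 (reachSet_adj hd1 d.adj hns)
  have := hp d.snd (Walk.dart_snd_mem_support_of_mem_darts p hd) hsnd
  exact ⟨d.fst, hd1, this ▸ d.adj⟩

lemma exists_min_path [DecidableEq V] {x y : V} (Wset : Set V)
    (h : ∃ w : G.Walk x y, ∀ z ∈ w.support, z ∈ Wset) :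
    ∃ p : G.Walk x y, p.IsPath ∧ (∀ z ∈ p.support, z ∈ Wset) ∧
      ∀ q : G.Walk x y, (∀ z ∈ q.support, z ∈ Wset) → p.length ≤ q.length := by
  classical
  obtain ⟨w, hw⟩ := h
  have hex : ∃ m, ∃ w : G.Walk x y, w.length = m ∧ ∀ z ∈ w.support, z ∈ Wset :=
    ⟨w.length, w, rfl, hw⟩
  obtain ⟨w0, hw0len, hw0sup⟩ := Nat.find_spec hex
  refine ⟨w0.bypass, w0.bypass_isPath, fun z hz => hw0sup z (w0.support_bypass_subset hz),
    fun q hq => ?_⟩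
  calc w0.bypass.length ≤ w0.length := w0.length_bypass_le
    _ = Nat.find hex := hw0len
    _ ≤ q.length := Nat.find_min' hex ⟨q, rfl, hq⟩

end ChordalAux


/-- In a chordal graph, every minimal separator is a clique. -/
theorem minimal_separator_is_clique [Fintype V] (G : SimpleGraph V)
    (hG : IsChordal G) (S : Set V) (hS : IsMinimalSeparator G S) :
    G.IsClique S := by
  classical
  obtain ⟨u, v, huv, huvadj, ⟨hsep, hmin⟩⟩ := hS
  obtain ⟨huS, hvS, hmeet⟩ := hsep
  rw [SimpleGraph.isClique_iff]
  intro x hx y hy hxy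
  by_contra hnadj
  set A := ChordalAux.reachSet G u S with hA
  set B := ChordalAux.reachSet G v S with hB
  have hvA : v ∉ A := by
    rintro ⟨q, hq⟩
    obtain ⟨z, hz1, hz2⟩ := hmeet q
    exact hq z hz1 hz2
  have huB : u ∉ B := by
    rintro ⟨q, hq⟩
    obtain ⟨z, hz1, hz2⟩ := hmeet q.reverse
    rw [Walk.support_reverse, List.mem_reverse] at hz1
    exact hq z hz1 hz2
  have hAB : ∀ a, a ∈ A → a ∉ B := by
    rintro a ⟨qa, hqa⟩ ⟨qb, hqb⟩
    obtain ⟨z, hz1, hz2⟩ := hmeet (qa.append qb.reverse)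
    rw [Walk.mem_support_append_iff] at hz1
    rcases hz1 with h | h
    · exact hqa z h hz2
    · rw [Walk.support_reverse, List.mem_reverse] at h; exact hqb z h hz2
  have hcross : ∀ a ∈ A, ∀ b ∈ B, ¬ G.Adj a b := by
    intro a ha b hb hadj
    exact hAB b (ChordalAux.reachSet_adj ha hadj (ChordalAux.reachSet_not_mem hb)) hb
  -- for every w ∈ S get a u-v walk whose only S-vertex is w
  have getp : ∀ w ∈ S, ∃ p : G.Walk u v, ∀ z ∈ p.support, z ∈ S → z = w := by
    intro w hw
    have hns : ¬ IsSeparator G u v (S \ {w}) := hmin _ (Set.sdiff_singleton_ssubset.mpr hw)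
    unfold IsSeparator at hns
    push_neg at hns
    obtain ⟨p, hp⟩ := hns (fun h => huS h.1) (fun h => hvS h.1)
    refine ⟨p, fun z hz hzS => ?_⟩
    have := hp z hz
    simp only [Set.mem_diff, Set.mem_singleton_iff, not_and, not_not] at this
    exact this hzS
  have nbrs : ∀ w ∈ S, (∃ a ∈ A, G.Adj a w) ∧ (∃ b ∈ B, G.Adj b w) := by
    intro w hw
    obtain ⟨p, hp⟩ := getp w hw
    constructor
    · exact ChordalAux.exists_nbr_in_reachSet p huS hvA hp
    · refine ChordalAux.exists_nbr_in_reachSet p.reverse hvS huB ?_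
      intro z hz
      rw [Walk.support_reverse, List.mem_reverse] at hz
      exact hp z hz
  obtain ⟨⟨a1, ha1A, ha1x⟩, ⟨b1, hb1B, hb1x⟩⟩ := nbrs x hx
  obtain ⟨⟨a2, ha2A, ha2y⟩, ⟨b2, hb2B, hb2y⟩⟩ := nbrs y hy
  obtain ⟨wA, hwA⟩ := ChordalAux.reachSet_connect ha1A ha2A
  obtain ⟨wB, hwB⟩ := ChordalAux.reachSet_connect hb1B hb2B
  have hexA : ∃ w : G.Walk x y, ∀ z ∈ w.support, z ∈ insert x (insert y A) := by
    refine ⟨Walk.cons ha1x.symm (wA.concat ha2y), fun z hz => ?_⟩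
    rw [Walk.support_cons, List.mem_cons] at hz
    rcases hz with rfl | hz
    · exact Set.mem_insert _ _
    · rw [Walk.support_concat] at hz
      simp only [List.concat_eq_append, List.mem_append, List.mem_singleton] at hz
      rcases hz with hz | rfl
      · exact Set.mem_insert_of_mem _ (Set.mem_insert_of_mem _ (hwA z hz))
      · exact Set.mem_insert_of_mem _ (Set.mem_insert _ _)
  have hexB : ∃ w : G.Walk x y, ∀ z ∈ w.support, z ∈ insert x (insert y B) := by
    refine ⟨Walk.cons hb1x.symm (wB.concat hb2y), fun z hz => ?_⟩
    rw [Walk.support_cons, List.mem_cons] at hz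
    rcases hz with rfl | hz
    · exact Set.mem_insert _ _
    · rw [Walk.support_concat] at hz
      simp only [List.concat_eq_append, List.mem_append, List.mem_singleton] at hz
      rcases hz with hz | rfl
      · exact Set.mem_insert_of_mem _ (Set.mem_insert_of_mem _ (hwB z hz))
      · exact Set.mem_insert_of_mem _ (Set.mem_insert _ _)
  obtain ⟨P1, hP1path, hP1sup, hP1min⟩ := ChordalAux.exists_min_path _ hexA
  obtain ⟨P2, hP2path, hP2sup, hP2min⟩ := ChordalAux.exists_min_path _ hexB
  have hx1 : P1.getVert 0 = x := P1.getVert_zero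
  have hy1 : P1.getVert P1.length = y := P1.getVert_length
  have hx2 : P2.getVert 0 = x := P2.getVert_zero
  have hy2 : P2.getVert P2.length = y := P2.getVert_length
  have hl1 : 2 ≤ P1.length := by
    by_contra hlt
    push_neg at hlt
    have : P1.length = 0 ∨ P1.length = 1 := by omega
    rcases this with h | h
    · exact hxy (Walk.eq_of_length_eq_zero h)
    · have h1 := P1.adj_getVert_succ (i := 0) (by omega)
      rw [P1.getVert_zero] at h1
      have h2 : P1.getVert 1 = y := P1.getVert_of_length_le (by omega)
      rw [h2] at h1
      exact hnadj h1
  have hl2 : 2 ≤ P2.length := by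
    by_contra hlt
    push_neg at hlt
    have : P2.length = 0 ∨ P2.length = 1 := by omega
    rcases this with h | h
    · exact hxy (Walk.eq_of_length_eq_zero h)
    · have h1 := P2.adj_getVert_succ (i := 0) (by omega)
      rw [P2.getVert_zero] at h1
      have h2 : P2.getVert 1 = y := P2.getVert_of_length_le (by omega)
      rw [h2] at h1
      exact hnadj h1
  have hP1int : ∀ i, 0 < i → i < P1.length → P1.getVert i ∈ A := by
    intro i h0 hl
    have hmem := ChordalAux.getVert_mem_support' P1 (le_of_lt hl)
    have hm := hP1sup _ hmem
    simp only [Set.mem_insert_iff] at hm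
    rcases hm with h | h | h
    · have := ChordalAux.getVert_injOn hP1path i (by omega) 0 (by omega)
        (by rw [hx1]; exact h)
      omega
    · have := ChordalAux.getVert_injOn hP1path i (by omega) P1.length le_rfl
        (by rw [hy1]; exact h)
      omega
    · exact h
  have hP2int : ∀ i, 0 < i → i < P2.length → P2.getVert i ∈ B := by
    intro i h0 hl
    have hmem := ChordalAux.getVert_mem_support' P2 (le_of_lt hl)
    have hm := hP2sup _ hmem
    simp only [Set.mem_insert_iff] at hm
    rcases hm with h | h | h
    · have := ChordalAux.getVert_injOn hP2path i (by omega) 0 (by omega)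
        (by rw [hx2]; exact h)
      omega
    · have := ChordalAux.getVert_injOn hP2path i (by omega) P2.length le_rfl
        (by rw [hy2]; exact h)
      omega
    · exact h
  have hP1chord : ∀ i j, i + 1 < j → j ≤ P1.length →
      ¬ G.Adj (P1.getVert i) (P1.getVert j) := by
    intro i j hij hj hadj
    obtain ⟨q, hql, hqs⟩ := ChordalAux.chord_shortcut P1 hij hj hadj
    exact absurd (hP1min q (fun z hz => hP1sup z (hqs z hz))) (by omega)
  have hP2chord : ∀ i j, i + 1 < j → j ≤ P2.length →
      ¬ G.Adj (P2.getVert i) (P2.getVert j) := by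
    intro i j hij hj hadj
    obtain ⟨q, hql, hqs⟩ := ChordalAux.chord_shortcut P2 hij hj hadj
    exact absurd (hP2min q (fun z hz => hP2sup z (hqs z hz))) (by omega)
  set n := P1.length + P2.length with hn
  have hn4 : 4 ≤ n := by omega
  let f : Fin n → V := fun i =>
    if i.val ≤ P1.length then P1.getVert i.val else P2.getVert (n - i.val)
  have hf_le : ∀ i : Fin n, i.val ≤ P1.length → f i = P1.getVert i.val := by
    intro i h; simp only [f]; rw [if_pos h]
  have hf_gt : ∀ i : Fin n, P1.length < i.val → f i = P2.getVert (n - i.val) := by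
    intro i h; simp only [f]; rw [if_neg (by omega)]
  have hne2 : ∀ iv jv : ℕ, iv ≤ P1.length → P1.length < jv → jv < n →
      P1.getVert iv ≠ P2.getVert (n - jv) := by
    intro iv jv hiv hjv hjn heq
    set k := n - jv with hk
    have hk1 : 1 ≤ k := by omega
    have hk2 : k ≤ P2.length - 1 := by omega
    rcases Nat.eq_zero_or_pos iv with h0 | hpos
    · rw [h0, hx1] at heq
      have heq' : P2.getVert 0 = P2.getVert k := by rw [hx2, ← heq]
      have := ChordalAux.getVert_injOn hP2path 0 (by omega) k (by omega) heq'
      omega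
    · rcases Nat.lt_or_ge iv P1.length with hl | hl
      · exact hAB _ (hP1int iv hpos hl) (by rw [heq]; exact hP2int k (by omega) (by omega))
      · have hiv' : iv = P1.length := by omega
        rw [hiv', hy1] at heq
        have heq' : P2.getVert P2.length = P2.getVert k := by rw [hy2, ← heq]
        have := ChordalAux.getVert_injOn hP2path P2.length le_rfl k (by omega) heq'
        omega
  have hinj : Function.Injective f := by
    intro i j hij
    have hiLt := i.isLt
    have hjLt := j.isLt
    apply Fin.ext
    by_cases hi : i.val ≤ P1.length <;> by_cases hj : j.val ≤ P1.length
    · rw [hf_le i hi, hf_le j hj] at hij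
      exact ChordalAux.getVert_injOn hP1path _ hi _ hj hij
    · rw [hf_le i hi, hf_gt j (by omega)] at hij
      exact absurd hij (hne2 i.val j.val hi (by omega) (by omega))
    · rw [hf_gt i (by omega), hf_le j hj] at hij
      exact absurd hij.symm (hne2 j.val i.val hj (by omega) (by omega))
    · rw [hf_gt i (by omega), hf_gt j (by omega)] at hij
      have := ChordalAux.getVert_injOn hP2path (n - i.val) (by omega) (n - j.val)
        (by omega) hij
      omega
  have hfwd : ∀ i j : Fin n, j.val = i.val + 1 → G.Adj (f i) (f j) := by
    intro i j hji
    have hiLt := i.isLt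
    have hjLt := j.isLt
    by_cases hj : j.val ≤ P1.length
    · rw [hf_le i (by omega), hf_le j hj, hji]
      exact P1.adj_getVert_succ (by omega)
    · by_cases hi : i.val ≤ P1.length
      · have hi' : i.val = P1.length := by omega
        have hk : n - j.val = P2.length - 1 := by omega
        rw [hf_le i hi, hf_gt j (by omega), hi', hy1, hk]
        have h2 := P2.adj_getVert_succ (i := P2.length - 1) (by omega)
        have h3 : P2.length - 1 + 1 = P2.length := by omega
        rw [h3, hy2] at h2
        exact h2.symm
      · rw [hf_gt i (by omega), hf_gt j (by omega)]
        have hk : n - i.val = (n - j.val) + 1 := by omega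
        rw [hk]
        exact (P2.adj_getVert_succ (by omega)).symm
  have hwrap : ∀ i j : Fin n, i.val = 0 → j.val = n - 1 → G.Adj (f i) (f j) := by
    intro i j hi0 hj0
    have hk : n - j.val = 1 := by omega
    rw [hf_le i (by omega), hf_gt j (by omega), hi0, hx1, hk]
    have h2 := P2.adj_getVert_succ (i := 0) (by omega)
    rwa [P2.getVert_zero] at h2
  have hback : ∀ i j : Fin n, i.val < j.val → G.Adj (f i) (f j) →
      (j.val = i.val + 1 ∨ (i.val = 0 ∧ j.val = n - 1)) := by
    intro i j hlt hadj
    have hiLt := i.isLt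
    have hjLt := j.isLt
    by_cases hj : j.val ≤ P1.length
    · rw [hf_le i (by omega), hf_le j hj] at hadj
      by_cases h' : j.val = i.val + 1
      · exact Or.inl h'
      · exact absurd hadj (hP1chord i.val j.val (by omega) hj)
    · by_cases hi : i.val ≤ P1.length
      · rw [hf_le i hi, hf_gt j (by omega)] at hadj
        set k := n - j.val with hk
        have hk1 : 1 ≤ k := by omega
        have hk2 : k ≤ P2.length - 1 := by omega
        rcases Nat.eq_zero_or_pos i.val with h0 | hpos
        · rw [h0, hx1] at hadj
          have hadj' : G.Adj (P2.getVert 0) (P2.getVert k) := by rw [hx2]; exact hadj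
          by_cases hk1' : k = 1
          · exact Or.inr ⟨h0, by omega⟩
          · exact absurd hadj' (hP2chord 0 k (by omega) (by omega))
        · rcases Nat.lt_or_ge i.val P1.length with hil | hil
          · exact absurd hadj
              (hcross _ (hP1int i.val hpos hil) _ (hP2int k (by omega) (by omega)))
          · have hi' : i.val = P1.length := by omega
            rw [hi', hy1] at hadj
            have hadj' : G.Adj (P2.getVert P2.length) (P2.getVert k) := by
              rw [hy2]; exact hadj
            by_cases hk2' : k = P2.length - 1
            · exact Or.inl (by omega)
            · exact absurd hadj'.symm (hP2chord k P2.length (by omega) le_rfl)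
      · rw [hf_gt i (by omega), hf_gt j (by omega)] at hadj
        by_cases h' : n - i.val = (n - j.val) + 1
        · exact Or.inl (by omega)
        · exact absurd hadj.symm
            (hP2chord (n - j.val) (n - i.val) (by omega) (by omega))
  refine (hG n hn4).false ⟨⟨f, hinj⟩, ?_⟩
  intro a b
  show G.Adj (f a) (f b) ↔ (cycleGraph n).Adj a b
  rw [ChordalAux.cycAdj hn4]
  constructor
  · intro hadj
    rcases Nat.lt_trichotomy a.val b.val with h | h | h
    · rcases hback a b h hadj with h' | h'
      · exact Or.inl h'
      · exact Or.inr (Or.inr (Or.inl h'))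
    · have : a = b := Fin.ext h
      subst this
      exact absurd hadj (G.loopless.irrefl _)
    · rcases hback b a h hadj.symm with h' | h'
      · exact Or.inr (Or.inl h')
      · exact Or.inr (Or.inr (Or.inr h'))
  · intro hcyc
    rcases hcyc with h | h | h | h
    · exact hfwd a b h
    · exact (hfwd b a h).symm
    · exact hwrap a b h.1 h.2
    · exact (hwrap b a h.1 h.2).symm
end

section
/- If T is a clique tree of a graph G and QQ' is an edge of T, then the label S = Q ∩ Q' is a minimal separator of G; more precisely, there exist vertices v ∈ Q \ Q' and v' ∈ Q' \ Q such that S is a {v,v'}-separator. -/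
open SimpleGraph

variable {V : Type*}

section Aux

lemma exists_maxClique_of_clique [Fintype V] (G : SimpleGraph V) (C : Set V)
    (hC : G.IsClique C) : ∃ R : Set V, IsMaxClique G R ∧ C ⊆ R := by
  obtain ⟨R, ⟨hRc, hCR⟩, hmax⟩ :=
    Set.Finite.exists_maximalFor id {R : Set V | G.IsClique R ∧ C ⊆ R}
      (Set.toFinite _) ⟨C, hC, subset_rfl⟩
  exact ⟨R, ⟨hRc, fun R' hR' hRR' => hRR'.antisymm (hmax ⟨hR', hCR.trans hRR'⟩ hRR')⟩, hCR⟩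

end Aux

/-- If `QQ'` is an edge of a clique tree of `G`, then its label `Q ∩ Q'` is a minimal
separator; more precisely there are `v ∈ Q \ Q'` and `v' ∈ Q' \ Q` such that
`Q ∩ Q'` is a `{v,v'}`-separator. -/
theorem cliqueTree_edge_label_is_separator [Fintype V] (G : SimpleGraph V)
    (T : CliqueTree G) (Q Q' : MaxClique G) (h : T.tree.Adj Q Q') :
    ∃ v ∈ Q.1 \ Q'.1, ∃ v' ∈ Q'.1 \ Q.1,
      IsMinUVSeparator G v v' (Q.1 ∩ Q'.1) ∧ IsMinimalSeparator G (Q.1 ∩ Q'.1) := by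
  classical
  have hQQ' : Q ≠ Q' := h.ne
  have hv : ∃ v, v ∈ Q.1 \ Q'.1 := by
    by_contra hc
    push_neg at hc
    have hsub : Q.1 ⊆ Q'.1 := fun x hx => by
      by_contra hx'; exact hc x ⟨hx, hx'⟩
    exact hQQ' (Subtype.ext (Q.2.2 Q'.1 Q'.2.1 hsub))
  have hv' : ∃ v', v' ∈ Q'.1 \ Q.1 := by
    by_contra hc
    push_neg at hc
    have hsub : Q'.1 ⊆ Q.1 := fun x hx => by
      by_contra hx'; exact hc x ⟨hx, hx'⟩
    exact hQQ' (Subtype.ext (Q'.2.2 Q.1 Q.2.1 hsub).symm)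
  obtain ⟨v, hvQ, hvQ'⟩ := hv
  obtain ⟨v', hv'Q', hv'Q⟩ := hv'
  set S : Set V := Q.1 ∩ Q'.1 with hS
  have hvS : v ∉ S := fun hx => hvQ' hx.2
  have hv'S : v' ∉ S := fun hx => hv'Q hx.1
  set G' : SimpleGraph (MaxClique G) := T.tree \ fromEdgeSet {s(Q, Q')} with hG'
  have hbridge : ¬ G'.Reachable Q Q' :=
    ((isBridge_iff.mp ((isAcyclic_iff_forall_adj_isBridge.mp T.isTree.2) h)))
  have key : ∀ x : V, x ∉ S → ∀ R1 R2 : MaxClique G, x ∈ R1.1 → x ∈ R2.1 →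
      G'.Reachable R1 R2 := by
    intro x hxS R1 R2 hx1 hx2
    have hconn := (T.subtree x).preconnected
    have hreach := hconn ⟨R1, hx1⟩ ⟨R2, hx2⟩
    have hmap : ∀ a b : {R : MaxClique G | x ∈ R.1},
        (T.tree.induce {R : MaxClique G | x ∈ R.1}).Adj a b → G'.Adj a.1 b.1 := by
      intro a b hab
      have hadj : T.tree.Adj a.1 b.1 := hab
      refine ⟨hadj, ?_⟩
      intro hf
      rw [fromEdgeSet_adj] at hf
      have he : s(a.1, b.1) = s(Q, Q') := by simpa using hf.1
      rcases Sym2.eq_iff.mp he with ⟨ha, hb⟩ | ⟨ha, hb⟩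
      · exact hxS ⟨ha ▸ a.2, hb ▸ b.2⟩
      · exact hxS ⟨hb ▸ b.2, ha ▸ a.2⟩
    exact hreach.map ⟨Subtype.val, fun {a b} hab => hmap a b hab⟩
  have main : ∀ (a b : V) (p : G.Walk a b), (∀ x ∈ p.support, x ∉ S) →
      ∀ R R0 : MaxClique G, a ∈ R.1 → b ∈ R0.1 → G'.Reachable R R0 := by
    intro a b p
    induction p with
    | nil =>
      intro hsup R R0 haR haR0
      exact key _ (hsup _ (by simp)) R R0 haR haR0
    | @cons a b c hab q ih =>
      intro hsup R R0 haR hcR0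
      obtain ⟨R', hR', habR'⟩ := exists_maxClique_of_clique G {a, b}
        (isClique_pair.mpr fun _ => hab)
      have haR' : a ∈ R' := habR' (by simp)
      have hbR' : b ∈ R' := habR' (by simp)
      exact (key a (hsup a (by simp)) R ⟨R', hR'⟩ haR haR').trans
        (ih (fun x hx => hsup x (by simp [hx])) ⟨R', hR'⟩ R0 hbR' hcR0)
  have hsep : IsSeparator G v v' S := by
    refine ⟨hvS, hv'S, fun p => ?_⟩
    by_contra hc
    push_neg at hc
    exact hbridge (main v v' p hc Q Q' hvQ hv'Q')
  have hne : v ≠ v' := fun he => hv'Q (he ▸ hvQ)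
  have hnadj : ¬ G.Adj v v' := by
    intro hadj
    obtain ⟨x, hx, hxS⟩ := hsep.2.2 (Walk.cons hadj Walk.nil)
    simp only [Walk.support_cons, Walk.support_nil, List.mem_cons,
      List.mem_singleton, List.not_mem_nil, or_false] at hx
    rcases hx with rfl | rfl
    · exact hvS hxS
    · exact hv'S hxS
  have hmin : ∀ T' : Set V, T' ⊂ S → ¬ IsSeparator G v v' T' := by
    intro T' hT' hsepT'
    obtain ⟨s, hsS, hsT'⟩ := Set.exists_of_ssubset hT'
    have hvs : v ≠ s := fun he => hvS (he ▸ hsS)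
    have hsv' : s ≠ v' := fun he => hv'S (he ▸ hsS)
    have hadj1 : G.Adj v s := Q.2.1 hvQ hsS.1 hvs
    have hadj2 : G.Adj s v' := Q'.2.1 hsS.2 hv'Q' hsv'
    obtain ⟨x, hx, hxT'⟩ := hsepT'.2.2 (Walk.cons hadj1 (Walk.cons hadj2 Walk.nil))
    simp only [Walk.support_cons, Walk.support_nil, List.mem_cons,
      List.mem_singleton, List.not_mem_nil, or_false] at hx
    rcases hx with rfl | rfl | rfl
    · exact hsepT'.1 hxT'
    · exact hsT' hxT'
    · exact hsepT'.2.1 hxT'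
  exact ⟨v, ⟨hvQ, hvQ'⟩, v', ⟨hv'Q', hv'Q⟩, ⟨hsep, hmin⟩,
    v, v', hne, hnadj, hsep, hmin⟩
end

section
/- A graph is an interval graph if and only if it has a clique path, i.e., a clique tree that is a path. -/
open SimpleGraph

variable {V : Type*}

/-- `Q` is a leaf of the subtree induced on `W`: it lies in `W` and has exactly one
neighbor in `W`. -/
def IsLeafIn (T : SimpleGraph α) (W : Set α) (Q : α) : Prop :=
  Q ∈ W ∧ ∃! R, R ∈ W ∧ T.Adj Q R

/-- `W` is a connected set of cliques of the clique tree `T` meeting each of the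
subtrees `T^{z1}, T^{z2}, T^{z3}`. -/
def IsConnector3 (G : SimpleGraph V) (T : CliqueTree G) (z1 z2 z3 : V)
    (W : Set (MaxClique G)) : Prop :=
  (T.tree.induce W).Connected ∧
    (∃ Q ∈ W, z1 ∈ Q.1) ∧ (∃ Q ∈ W, z2 ∈ Q.1) ∧ (∃ Q ∈ W, z3 ∈ Q.1)

/-- `W` is a connected set of cliques of the clique tree `T` meeting each of the
subtrees `T^{z1}, T^{z2}, T^{z3}, T^{z4}`. -/
def IsConnector4 (G : SimpleGraph V) (T : CliqueTree G) (z1 z2 z3 z4 : V)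
    (W : Set (MaxClique G)) : Prop :=
  (T.tree.induce W).Connected ∧
    (∃ Q ∈ W, z1 ∈ Q.1) ∧ (∃ Q ∈ W, z2 ∈ Q.1) ∧ (∃ Q ∈ W, z3 ∈ Q.1) ∧ (∃ Q ∈ W, z4 ∈ Q.1)

/-- An interval graph: the intersection graph of a family of (nonempty) closed
intervals of the real line. -/
def IsIntervalGraph (G : SimpleGraph V) : Prop :=
  ∃ a b : V → ℝ, (∀ v, a v ≤ b v) ∧
    ∀ u v : V, G.Adj u v ↔ u ≠ v ∧ (Set.Icc (a u) (b u) ∩ Set.Icc (a v) (b v)).Nonempty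

/-- The underlying tree of `T` is a path: every vertex has at most two neighbors. -/
def CliqueTree.IsCliquePath (G : SimpleGraph V) (T : CliqueTree G) : Prop :=
  ∀ Q a b c : MaxClique G, T.tree.Adj Q a → T.tree.Adj Q b → T.tree.Adj Q c →
    a = b ∨ a = c ∨ b = c


namespace IGAux

variable {α : Type*}

/-- The "path graph" on `α` induced by an equivalence with `Fin n`. -/
def distGraph {n : ℕ} (e : α ≃ Fin n) : SimpleGraph α where
  Adj x y := Nat.dist (e x : ℕ) (e y : ℕ) = 1
  symm := by constructor; intro x y h; rwa [Nat.dist_comm]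
  loopless := by constructor; intro x h; simp [Nat.dist_self] at h

lemma distGraph_adj {n : ℕ} (e : α ≃ Fin n) {x y : α} :
    (distGraph e).Adj x y ↔ Nat.dist (e x : ℕ) (e y : ℕ) = 1 := Iff.rfl

lemma distGraph_reachable_aux {n : ℕ} (e : α ≃ Fin n) (d : ℕ) :
    ∀ x y : α, (e x : ℕ) ≤ (e y : ℕ) → (e y : ℕ) - (e x : ℕ) = d →
      (distGraph e).Reachable x y := by
  induction d with
  | zero =>
    intro x y h1 h2
    have : e x = e y := Fin.ext (by omega)
    rw [e.injective this]
  | succ d ih =>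
    intro x y h1 h2
    have hlt : (e x : ℕ) + 1 < n := by have := (e y).isLt; omega
    set z := e.symm ⟨(e x : ℕ) + 1, hlt⟩ with hz
    have hez : (e z : ℕ) = (e x : ℕ) + 1 := by rw [hz, Equiv.apply_symm_apply]
    have adj : (distGraph e).Adj x z := by
      rw [distGraph_adj, hez]; simp [Nat.dist]
    exact adj.reachable.trans (ih z y (by omega) (by omega))

lemma distGraph_reachable {n : ℕ} (e : α ≃ Fin n) (x y : α) :
    (distGraph e).Reachable x y := by
  rcases le_total ((e x : ℕ)) ((e y : ℕ)) with h | h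
  · exact distGraph_reachable_aux e _ x y h rfl
  · exact (distGraph_reachable_aux e _ y x h rfl).symm

lemma distGraph_crossing {n : ℕ} (e : α ≃ Fin n) {u w : α} (p : (distGraph e).Walk u w)
    (m : ℕ) (hu : (e u : ℕ) ≤ m) (hw : m < (e w : ℕ)) :
    ∃ a b, s(a, b) ∈ p.edges ∧ (e a : ℕ) = m ∧ (e b : ℕ) = m + 1 := by
  induction p with
  | nil => omega
  | @cons u v w h q ih =>
    by_cases hv : (e v : ℕ) ≤ m
    · obtain ⟨a, b, hab, h1, h2⟩ := ih hv hw
      exact ⟨a, b, by simp [hab], h1, h2⟩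
    · push_neg at hv
      have hd : Nat.dist (e u : ℕ) (e v : ℕ) = 1 := h
      simp only [Nat.dist] at hd
      refine ⟨u, v, by simp, by omega, by omega⟩

lemma distGraph_isAcyclic {n : ℕ} (e : α ≃ Fin n) : (distGraph e).IsAcyclic := by
  rw [isAcyclic_iff_forall_adj_isBridge]
  intro v w h
  rw [isBridge_iff_adj_and_forall_walk_mem_edges]
  refine fun p => ?_
  have hd : Nat.dist (e v : ℕ) (e w : ℕ) = 1 := h
  simp only [Nat.dist] at hd
  rcases (by omega : (e w : ℕ) = (e v : ℕ) + 1 ∨ (e v : ℕ) = (e w : ℕ) + 1) with h1 | h1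
  · obtain ⟨a, b, hab, ha, hb⟩ := distGraph_crossing e p (e v : ℕ) le_rfl (by omega)
    have hav : a = v := e.injective (Fin.ext ha)
    have hbw : b = w := e.injective (Fin.ext (by omega))
    rwa [hav, hbw] at hab
  · obtain ⟨a, b, hab, ha, hb⟩ := distGraph_crossing e p.reverse (e w : ℕ) le_rfl (by omega)
    have hav : a = w := e.injective (Fin.ext ha)
    have hbw : b = v := e.injective (Fin.ext (by omega))
    rw [hav, hbw] at hab
    rw [SimpleGraph.Walk.edges_reverse, List.mem_reverse] at hab
    rwa [Sym2.eq_swap] at hab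

lemma distGraph_isTree {n : ℕ} (e : α ≃ Fin n) [Nonempty α] : (distGraph e).IsTree :=
  ⟨⟨fun x y => distGraph_reachable e x y⟩, distGraph_isAcyclic e⟩

lemma distGraph_neighbors {n : ℕ} (e : α ≃ Fin n) {x a b c : α}
    (ha : (distGraph e).Adj x a) (hb : (distGraph e).Adj x b) (hc : (distGraph e).Adj x c) :
    a = b ∨ a = c ∨ b = c := by
  have key : ∀ y z : α, (e y : ℕ) = (e z : ℕ) → y = z := fun y z h =>
    e.injective (Fin.ext h)
  have da : Nat.dist (e x : ℕ) (e a : ℕ) = 1 := ha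
  have db : Nat.dist (e x : ℕ) (e b : ℕ) = 1 := hb
  have dc : Nat.dist (e x : ℕ) (e c : ℕ) = 1 := hc
  simp only [Nat.dist] at da db dc
  rcases (by omega : (e a : ℕ) = (e x : ℕ) + 1 ∨ (e a : ℕ) + 1 = (e x : ℕ)) with h1 | h1 <;>
  rcases (by omega : (e b : ℕ) = (e x : ℕ) + 1 ∨ (e b : ℕ) + 1 = (e x : ℕ)) with h2 | h2 <;>
  rcases (by omega : (e c : ℕ) = (e x : ℕ) + 1 ∨ (e c : ℕ) + 1 = (e x : ℕ)) with h3 | h3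
  · exact Or.inl (key _ _ (by omega))
  · exact Or.inl (key _ _ (by omega))
  · exact Or.inr (Or.inl (key _ _ (by omega)))
  · exact Or.inr (Or.inr (key _ _ (by omega)))
  · exact Or.inr (Or.inr (key _ _ (by omega)))
  · exact Or.inr (Or.inl (key _ _ (by omega)))
  · exact Or.inl (key _ _ (by omega))
  · exact Or.inl (key _ _ (by omega))

lemma distGraph_induce_reachable_aux {n : ℕ} (e : α ≃ Fin n) {W : Set α}
    (hconv : ∀ x ∈ W, ∀ z ∈ W, ∀ y : α, (e x : ℕ) ≤ (e y : ℕ) → (e y : ℕ) ≤ (e z : ℕ) → y ∈ W)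
    (d : ℕ) :
    ∀ (x z : α) (hx : x ∈ W) (hz : z ∈ W), (e x : ℕ) ≤ (e z : ℕ) →
      (e z : ℕ) - (e x : ℕ) = d → ((distGraph e).induce W).Reachable ⟨x, hx⟩ ⟨z, hz⟩ := by
  induction d with
  | zero =>
    intro x z hx hz h1 h2
    have hxz : x = z := e.injective (Fin.ext (by omega))
    subst hxz
    rfl
  | succ d ih =>
    intro x z hx hz h1 h2
    have hlt : (e x : ℕ) + 1 < n := by have := (e z).isLt; omega
    set y := e.symm ⟨(e x : ℕ) + 1, hlt⟩ with hy
    have hey : (e y : ℕ) = (e x : ℕ) + 1 := by rw [hy, Equiv.apply_symm_apply]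
    have hyW : y ∈ W := hconv x hx z hz y (by omega) (by omega)
    have adj : ((distGraph e).induce W).Adj ⟨x, hx⟩ ⟨y, hyW⟩ := by
      show (distGraph e).Adj x y
      rw [distGraph_adj, hey]; simp [Nat.dist]
    exact adj.reachable.trans (ih y z hyW hz (by omega) (by omega))

lemma distGraph_induce_connected {n : ℕ} (e : α ≃ Fin n) {W : Set α} (hne : W.Nonempty)
    (hconv : ∀ x ∈ W, ∀ z ∈ W, ∀ y : α, (e x : ℕ) ≤ (e y : ℕ) → (e y : ℕ) ≤ (e z : ℕ) → y ∈ W) :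
    ((distGraph e).induce W).Connected := by
  obtain ⟨x₀, hx₀⟩ := hne
  haveI : Nonempty ↥W := ⟨⟨x₀, hx₀⟩⟩
  refine ⟨fun a b => ?_⟩
  obtain ⟨x, hx⟩ := a
  obtain ⟨z, hz⟩ := b
  rcases le_total ((e x : ℕ)) ((e z : ℕ)) with h | h
  · exact distGraph_induce_reachable_aux e hconv _ x z hx hz h rfl
  · exact (distGraph_induce_reachable_aux e hconv _ z x hz hx h rfl).symm

lemma distGraph_walk_exists_index {n : ℕ} (e : α ≃ Fin n) {W : Set α} :
    ∀ {x z : ↥W} (p : ((distGraph e).induce W).Walk x z) (k : ℕ),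
      (e (x : α) : ℕ) ≤ k → k ≤ (e (z : α) : ℕ) → ∃ y ∈ p.support, (e (y : α) : ℕ) = k := by
  intro x z p
  induction p with
  | @nil u => intro k h1 h2; exact ⟨u, by simp, by omega⟩
  | @cons u v w h q ih =>
    intro k h1 h2
    rcases Nat.eq_or_lt_of_le h1 with heq | hlt
    · exact ⟨u, by simp, heq⟩
    · have hd : Nat.dist (e (u : α) : ℕ) (e (v : α) : ℕ) = 1 := h
      simp only [Nat.dist] at hd
      obtain ⟨y, hy, hk⟩ := ih k (by omega) h2
      exact ⟨y, by simp [hy], hk⟩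


lemma induce_reachable_of_walk {T : SimpleGraph β} {s : Set β} :
    ∀ {u v : β} (p : T.Walk u v), (∀ y ∈ p.support, y ∈ s) →
      ∀ (hu : u ∈ s) (hv : v ∈ s), (T.induce s).Reachable ⟨u, hu⟩ ⟨v, hv⟩ := by
  intro u v p
  induction p with
  | nil => intro _ hu hv; rfl
  | @cons u w v had q ih =>
    intro h hu hv
    have hw : w ∈ s := h w (by simp)
    have adj : (T.induce s).Adj ⟨u, hu⟩ ⟨w, hw⟩ := had
    exact adj.reachable.trans (ih (fun y hy => h y (by simp [hy])) hw hv)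

/-- A finite tree with max degree ≤ 2 can be enumerated along a path. -/
lemma exists_pathEquiv :
    ∀ (n : ℕ) (β : Type*) [Fintype β] (T : SimpleGraph β), Fintype.card β = n →
      T.IsTree → (∀ x a b c : β, T.Adj x a → T.Adj x b → T.Adj x c →
        a = b ∨ a = c ∨ b = c) →
      ∃ e : β ≃ Fin n, ∀ x y : β, T.Adj x y ↔ Nat.dist (e x : ℕ) (e y : ℕ) = 1 := by
  intro n
  induction n using Nat.strong_induction_on with
  | _ n ih =>
  intro β _ T hcard htree hdeg
  classical
  rcases Nat.lt_or_ge n 2 with hn2 | hn2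
  · -- n = 0 or 1
    haveI : Nonempty β := htree.isConnected.nonempty
    have hpos : 0 < n := by rw [← hcard]; exact Fintype.card_pos
    have hn1 : n = 1 := by omega
    subst hn1
    haveI : Subsingleton β := Fintype.card_le_one_iff_subsingleton.1 (by omega)
    refine ⟨Fintype.equivFinOfCardEq hcard, fun x y => ?_⟩
    have hxy : x = y := Subsingleton.elim x y
    subst hxy
    simp [T.irrefl, Nat.dist_self]
  · -- n ≥ 2
    haveI : Nonempty β := htree.isConnected.nonempty
    haveI : Nontrivial β := Fintype.one_lt_card_iff_nontrivial.1 (by omega)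
    have hnbr : ∀ x : β, ∃ z, T.Adj x z := by
      intro x
      obtain ⟨y, hy⟩ := exists_ne x
      obtain ⟨p⟩ := htree.isConnected.preconnected x y
      cases p with
      | nil => exact absurd rfl (Ne.symm hy)
      | cons h q => exact ⟨_, h⟩
    have hleaf : ∃ x, T.degree x = 1 := by
      by_contra hno
      push_neg at hno
      have hge : ∀ x : β, 2 ≤ T.degree x := by
        intro x
        obtain ⟨z, hz⟩ := hnbr x
        have h1 : 0 < T.degree x := by
          rw [T.degree_pos_iff_exists_adj]; exact ⟨z, hz⟩
        have := hno x
        omega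
      have hsum : 2 * n ≤ ∑ x : β, T.degree x := by
        calc 2 * n = Finset.univ.card * 2 := by rw [Finset.card_univ, hcard]; ring
        _ ≤ ∑ x : β, T.degree x := Finset.card_nsmul_le_sum _ _ _ (fun x _ => hge x)
      rw [sum_degrees_eq_twice_card_edges] at hsum
      have hedge := htree.card_edgeFinset
      omega
    obtain ⟨x, hx⟩ := hleaf
    obtain ⟨w, hwdef⟩ := Finset.card_eq_one.1 (by rwa [← T.card_neighborFinset_eq_degree] at hx)
    have hw : T.Adj x w := by
      rw [← T.mem_neighborFinset, hwdef]; exact Finset.mem_singleton_self w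
    have huniq : ∀ y, T.Adj x y → y = w := by
      intro y hy
      have : y ∈ T.neighborFinset x := (T.mem_neighborFinset x y).2 hy
      rwa [hwdef, Finset.mem_singleton] at this
    set s : Set β := {y | y ≠ x} with hs
    have hws : w ∈ s := hw.ne'
    have hcard' : Fintype.card ↥s = n - 1 := by
      have h0 : Fintype.card ↥s = Fintype.card {y : β // ¬ y = x} :=
        Fintype.card_congr (Equiv.refl _)
      rw [h0, Fintype.card_subtype_compl, Fintype.card_subtype_eq, hcard]
    -- T' is a tree
    have htree' : (T.induce s).IsTree := by
      constructor
      · haveI : Nonempty ↥s := ⟨⟨w, hws⟩⟩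
        refine ⟨fun u v => ?_⟩
        obtain ⟨p, hp, -⟩ := htree.existsUnique_path u.1 v.1
        have hxsup : x ∉ p.support := by
          intro hxs
          have hxu : x ≠ u.1 := fun h => u.2 h.symm
          have hxv : x ≠ v.1 := fun h => v.2 h.symm
          set p₁ := p.takeUntil x hxs with hp₁
          set p₂ := p.dropUntil x hxs with hp₂
          have hn₂ : ¬ p₂.Nil := Walk.not_nil_of_ne hxv
          have hw2 : w ∈ p₂.support.tail := by
            have h1 : T.Adj x (p₂.getVert 1) := p₂.adj_snd hn₂
            have h2 : p₂.getVert 1 = w := huniq _ h1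
            have h3 : p₂.getVert 1 ∈ p₂.tail.support := p₂.tail.start_mem_support
            have h4 : p₂.support.tail = p₂.tail.support := by
              have := p₂.cons_support_tail hn₂
              rw [← this, List.tail_cons]
            rw [h4, ← h2]; exact h3
          have hw1 : w ∈ p₁.support := by
            have hn₁ : ¬ p₁.reverse.Nil := Walk.not_nil_of_ne hxu
            have h1 : T.Adj x (p₁.reverse.getVert 1) := p₁.reverse.adj_snd hn₁
            have h2 : p₁.reverse.getVert 1 = w := huniq _ h1
            have h3 : p₁.reverse.getVert 1 ∈ p₁.reverse.support := by
              rw [Walk.mem_support_iff_exists_getVert]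
              refine ⟨1, rfl, ?_⟩
              have hlen : p₁.reverse.length ≠ 0 :=
                fun h => hn₁ (Walk.nil_iff_length_eq.2 h)
              omega
            rw [Walk.support_reverse, List.mem_reverse] at h3
            rwa [h2] at h3
          have hnd : p.support.Nodup := hp.support_nodup
          rw [← p.take_spec hxs, SimpleGraph.Walk.support_append] at hnd
          exact (List.disjoint_of_nodup_append hnd) hw1 hw2
        have hall : ∀ y ∈ p.support, y ∈ s := fun y hy hyx => hxsup (hyx ▸ hy)
        exact induce_reachable_of_walk p hall u.2 v.2
      · intro v c hc
        exact htree.IsAcyclic (c.map (SimpleGraph.Embedding.induce s).toHom)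
          (hc.map (f := (SimpleGraph.Embedding.induce s).toHom)
            (by intro a b hab; exact Subtype.val_injective hab))
    obtain ⟨e₁, hadj₁⟩ := ih (n - 1) (by omega) ↥s (T.induce s) hcard' htree' (by
      intro Q a b c ha hb hc
      rcases hdeg Q.1 a.1 b.1 c.1 ha hb hc with h | h | h
      exacts [Or.inl (Subtype.ext h), Or.inr (Or.inl (Subtype.ext h)),
        Or.inr (Or.inr (Subtype.ext h))])
    set w' : ↥s := ⟨w, hws⟩ with hw'
    have hdegw : ∀ y z : ↥s, (T.induce s).Adj w' y → (T.induce s).Adj w' z → y = z := by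
      intro y z hy hz
      rcases hdeg w y.1 z.1 x hy hz hw.symm with h | h | h
      · exact Subtype.ext h
      · exact absurd h y.2
      · exact absurd h z.2
    have claim : (e₁ w' : ℕ) = 0 ∨ (e₁ w' : ℕ) = n - 2 := by
      by_contra hcl
      push_neg at hcl
      have hk := (e₁ w').isLt
      have h1 : 0 < (e₁ w' : ℕ) := Nat.pos_of_ne_zero hcl.1
      have h2 : (e₁ w' : ℕ) + 1 < n - 1 := by omega
      set y := e₁.symm ⟨(e₁ w' : ℕ) - 1, by omega⟩ with hy
      set z := e₁.symm ⟨(e₁ w' : ℕ) + 1, by omega⟩ with hz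
      have hey : (e₁ y : ℕ) = (e₁ w' : ℕ) - 1 := by rw [hy, Equiv.apply_symm_apply]
      have hez : (e₁ z : ℕ) = (e₁ w' : ℕ) + 1 := by rw [hz, Equiv.apply_symm_apply]
      have hay : (T.induce s).Adj w' y := by
        rw [hadj₁, hey]; simp only [Nat.dist]; omega
      have haz : (T.induce s).Adj w' z := by
        rw [hadj₁, hez]; simp only [Nat.dist]; omega
      have := hdegw y z hay haz
      rw [this] at hey
      omega
    obtain ⟨e₂, hadj₂, hw0⟩ : ∃ e₂ : ↥s ≃ Fin (n - 1),
        (∀ a b : ↥s, (T.induce s).Adj a b ↔ Nat.dist (e₂ a : ℕ) (e₂ b : ℕ) = 1) ∧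
        (e₂ w' : ℕ) = 0 := by
      rcases claim with h0 | hn2'
      · exact ⟨e₁, hadj₁, h0⟩
      · refine ⟨e₁.trans (Fin.revPerm), fun a b => ?_, ?_⟩
        · rw [hadj₁]
          have ha := (e₁ a).isLt
          have hb := (e₁ b).isLt
          simp only [Equiv.trans_apply, Fin.revPerm_apply, Fin.val_rev, Nat.dist]
          omega
        · have := (e₁ w').isLt
          simp only [Equiv.trans_apply, Fin.revPerm_apply, Fin.val_rev, hn2']
          omega
    -- assemble the equivalence on β
    have hn1 : n - 1 + 1 = n := by omega
    let e : β ≃ Fin n := ((Equiv.optionSubtypeNe x).symm).trans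
      (e₂.optionCongr.trans ((finSuccEquiv (n - 1)).symm.trans (finCongr hn1)))
    have hex : (e x : ℕ) = 0 := by
      simp [e, Equiv.optionSubtypeNe_symm_self, Equiv.optionCongr,
        Option.map_none, finSuccEquiv_symm_none]
    have hey : ∀ (y : β) (h : y ≠ x), (e y : ℕ) = (e₂ ⟨y, h⟩ : ℕ) + 1 := by
      intro y h
      simp [e, Equiv.optionSubtypeNe_symm_of_ne h, Equiv.optionCongr,
        Option.map_some, finSuccEquiv_symm_some, Fin.val_succ]
    refine ⟨e, ?_⟩
    intro y z
    by_cases hy : y = x <;> by_cases hz : z = x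
    · subst hy; subst hz; simp [T.irrefl, Nat.dist_self]
    · subst hy
      rw [hex, hey z hz]
      constructor
      · intro h
        have hzw : z = w := huniq z h
        have : (⟨z, hz⟩ : ↥s) = w' := Subtype.ext hzw
        rw [this, hw0]
        simp [Nat.dist]
      · intro h
        simp only [Nat.dist] at h
        have he0 : (e₂ ⟨z, hz⟩ : ℕ) = 0 := by omega
        have : (⟨z, hz⟩ : ↥s) = w' := e₂.injective (Fin.ext (by rw [he0, hw0]))
        have hzw : z = w := congrArg Subtype.val this
        rw [hzw]; exact hw
    · subst hz
      rw [hex, hey y hy]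
      constructor
      · intro h
        have hyw : y = w := huniq y h.symm
        have : (⟨y, hy⟩ : ↥s) = w' := Subtype.ext hyw
        rw [this, hw0, Nat.dist_comm]
        simp [Nat.dist]
      · intro h
        rw [Nat.dist_comm] at h
        simp only [Nat.dist] at h
        have he0 : (e₂ ⟨y, hy⟩ : ℕ) = 0 := by omega
        have : (⟨y, hy⟩ : ↥s) = w' := e₂.injective (Fin.ext (by rw [he0, hw0]))
        have hyw : y = w := congrArg Subtype.val this
        rw [hyw]; exact hw.symm
    · rw [hey y hy, hey z hz]
      have hiff : T.Adj y z ↔ (T.induce s).Adj ⟨y, hy⟩ ⟨z, hz⟩ := Iff.rfl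
      rw [hiff, hadj₂]
      simp only [Nat.dist]
      constructor <;> intro h <;> omega


lemma exists_maxClique_superset [Fintype V] {G : SimpleGraph V} {s : Set V}
    (hs : G.IsClique s) : ∃ Q : Set V, IsMaxClique G Q ∧ s ⊆ Q := by
  classical
  let F : Finset (Finset V) :=
    Finset.univ.filter (fun t => G.IsClique (t : Set V) ∧ s.toFinset ⊆ t)
  have hmem : s.toFinset ∈ F := by
    simp only [F, Finset.mem_filter, Finset.mem_univ, true_and]
    exact ⟨by rwa [Set.coe_toFinset], subset_rfl⟩
  obtain ⟨t, htF, hmax⟩ := F.exists_max_image Finset.card ⟨_, hmem⟩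
  simp only [F, Finset.mem_filter, Finset.mem_univ, true_and] at htF
  refine ⟨(t : Set V), ⟨htF.1, ?_⟩, by rw [← Set.coe_toFinset s]; exact_mod_cast htF.2⟩
  intro R hR hsub
  have hRt : t ⊆ R.toFinset := by
    intro x hx; exact Set.mem_toFinset.2 (hsub hx)
  have hRF : R.toFinset ∈ F := by
    simp only [F, Finset.mem_filter, Finset.mem_univ, true_and]
    refine ⟨by rwa [Set.coe_toFinset], fun x hx => hRt (htF.2 hx)⟩
  have := hmax _ hRF
  have : t = R.toFinset := Finset.eq_of_subset_of_card_le hRt this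
  rw [this, Set.coe_toFinset]

lemma maxClique_nonempty [Nonempty V] {G : SimpleGraph V} {Q : Set V}
    (h : IsMaxClique G Q) : Q.Nonempty := by
  rcases Set.eq_empty_or_nonempty Q with rfl | hne
  · obtain ⟨v⟩ := ‹Nonempty V›
    have := h.2 {v} (G.isClique_singleton v) (Set.empty_subset _)
    exact absurd this.symm (Set.singleton_ne_empty v)
  · exact hne

lemma exists_mem_maxClique [Fintype V] {G : SimpleGraph V} (v : V) :
    ∃ Q : MaxClique G, v ∈ Q.1 := by
  obtain ⟨Q, hQ, hsub⟩ := exists_maxClique_superset (G.isClique_singleton v)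
  exact ⟨⟨Q, hQ⟩, hsub rfl⟩

section Dir1

variable [Fintype V] [Nonempty V] {G : SimpleGraph V}
variable (a b : V → ℝ) (hab : ∀ v, a v ≤ b v)
variable (hadj : ∀ u v : V, G.Adj u v ↔
    u ≠ v ∧ (Set.Icc (a u) (b u) ∩ Set.Icc (a v) (b v)).Nonempty)

/-- common point of a maximal clique -/
noncomputable def cliquePt (Q : MaxClique G) : ℝ :=
  (Set.toFinite Q.1).toFinset.sup'
    (by rw [Set.Finite.toFinset_nonempty]; exact maxClique_nonempty Q.2) a

include hab hadj in
lemma cliquePt_mem {Q : MaxClique G} {v : V} (hv : v ∈ Q.1) :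
    a v ≤ cliquePt a Q ∧ cliquePt a Q ≤ b v := by
  constructor
  · exact Finset.le_sup' a ((Set.Finite.mem_toFinset _).2 hv)
  · obtain ⟨u, hu, hequ⟩ := Finset.exists_mem_eq_sup'
      (s := (Set.toFinite Q.1).toFinset)
      (by rw [Set.Finite.toFinset_nonempty]; exact maxClique_nonempty Q.2) a
    show (Set.toFinite Q.1).toFinset.sup' _ a ≤ b v
    rw [hequ]
    rw [Set.Finite.mem_toFinset] at hu
    rcases eq_or_ne u v with rfl | hne
    · exact hab u
    · have : G.Adj u v := Q.2.1 hu hv hne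
      obtain ⟨t, ht⟩ := ((hadj u v).1 this).2
      exact le_trans ht.1.1 ht.2.2

include hab hadj in
lemma consec {Q R S : MaxClique G} (h1 : cliquePt a Q ≤ cliquePt a R)
    (h2 : cliquePt a R ≤ cliquePt a S) {v : V} (hQ : v ∈ Q.1) (hS : v ∈ S.1) :
    v ∈ R.1 := by
  have hv1 : a v ≤ cliquePt a R := le_trans (cliquePt_mem a b hab hadj hQ).1 h1
  have hv2 : cliquePt a R ≤ b v := le_trans h2 (cliquePt_mem a b hab hadj hS).2
  have hclique : G.IsClique (insert v R.1) := by
    apply R.2.1.insert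
    intro u hu hne
    rw [hadj]
    refine ⟨hne, cliquePt a R, ?_, ?_⟩
    · exact ⟨hv1, hv2⟩
    · exact ⟨(cliquePt_mem a b hab hadj hu).1, (cliquePt_mem a b hab hadj hu).2⟩
  have := R.2.2 _ hclique (Set.subset_insert v R.1)
  rw [this]; exact Set.mem_insert v R.1

end Dir1


/-- a sorting equiv: e monotone w.r.t. a weight function -/
lemma exists_sorting_equiv {β : Type*} [Fintype β] (p : β → ℝ) :
    ∃ e : β ≃ Fin (Fintype.card β), ∀ x y : β, e x ≤ e y → p x ≤ p y := by
  classical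
  let g := Fintype.equivFin β
  let f : Fin (Fintype.card β) → ℝ := p ∘ g.symm
  let σ := Tuple.sort f
  refine ⟨g.trans σ.symm, fun x y h => ?_⟩
  have hm := Tuple.monotone_sort f h
  simpa [f, σ, Function.comp] using hm

theorem dir1 [Fintype V] [Nonempty V] (G : SimpleGraph V)
    (a b : V → ℝ) (hab : ∀ v, a v ≤ b v)
    (hadj : ∀ u v : V, G.Adj u v ↔
      u ≠ v ∧ (Set.Icc (a u) (b u) ∩ Set.Icc (a v) (b v)).Nonempty) :
    ∃ T : CliqueTree G, CliqueTree.IsCliquePath G T := by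
  classical
  letI : Fintype (MaxClique G) := Fintype.ofFinite _
  haveI : Nonempty (MaxClique G) := by
    obtain ⟨Q, _⟩ := exists_mem_maxClique (G := G) (Classical.arbitrary V)
    exact ⟨Q⟩
  obtain ⟨e, hmono⟩ := exists_sorting_equiv (cliquePt (G := G) a)
  have hconsec : ∀ (v : V), ∀ x ∈ {Q : MaxClique G | v ∈ Q.1}, ∀ z ∈ {Q : MaxClique G | v ∈ Q.1},
      ∀ y : MaxClique G, (e x : ℕ) ≤ (e y : ℕ) → (e y : ℕ) ≤ (e z : ℕ) →
      y ∈ {Q : MaxClique G | v ∈ Q.1} := by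
    intro v x hx z hz y h1 h2
    exact consec a b hab hadj (hmono x y (by exact Fin.le_def.2 h1))
      (hmono y z (Fin.le_def.2 h2)) hx hz
  refine ⟨⟨distGraph e, distGraph_isTree e, fun v => ?_⟩,
    fun Q x y z hx hy hz => distGraph_neighbors e hx hy hz⟩
  refine distGraph_induce_connected e ?_ (hconsec v)
  obtain ⟨Q, hQ⟩ := exists_mem_maxClique (G := G) v
  exact ⟨Q, hQ⟩


theorem dir2 [Fintype V] (G : SimpleGraph V)
    (T : CliqueTree G) (hpath : CliqueTree.IsCliquePath G T) : IsIntervalGraph G := by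
  classical
  letI : Fintype (MaxClique G) := Fintype.ofFinite _
  obtain ⟨e, he⟩ := exists_pathEquiv (Fintype.card (MaxClique G)) (MaxClique G) T.tree rfl
    T.isTree hpath
  have hTeq : T.tree = distGraph e := by
    ext x y; exact he x y
  set S : V → Set (MaxClique G) := fun v => {Q : MaxClique G | v ∈ Q.1} with hS
  have hSne : ∀ v, ((Set.toFinite (S v)).toFinset.image
      (fun Q => (e Q : ℕ))).Nonempty := by
    intro v
    have : Nonempty ↥(S v) := (T.subtree v).nonempty
    obtain ⟨⟨Q, hQ⟩⟩ := this
    exact ⟨(e Q : ℕ), Finset.mem_image.2 ⟨Q, (Set.Finite.mem_toFinset _).2 hQ, rfl⟩⟩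
  set F : V → Finset ℕ := fun v => (Set.toFinite (S v)).toFinset.image (fun Q => (e Q : ℕ))
    with hF
  set A : V → ℕ := fun v => (F v).min' (hSne v) with hA
  set B : V → ℕ := fun v => (F v).max' (hSne v) with hB
  have hmemF : ∀ v (Q : MaxClique G), Q ∈ S v → (e Q : ℕ) ∈ F v := by
    intro v Q hQ
    exact Finset.mem_image.2 ⟨Q, (Set.Finite.mem_toFinset _).2 hQ, rfl⟩
  have hbounds : ∀ v (Q : MaxClique G), Q ∈ S v → A v ≤ (e Q : ℕ) ∧ (e Q : ℕ) ≤ B v := by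
    intro v Q hQ
    exact ⟨Finset.min'_le _ _ (hmemF v Q hQ), Finset.le_max' _ _ (hmemF v Q hQ)⟩
  have hwitA : ∀ v, ∃ Q ∈ S v, (e Q : ℕ) = A v := by
    intro v
    have := Finset.min'_mem (F v) (hSne v)
    obtain ⟨Q, hQ, hQ2⟩ := Finset.mem_image.1 this
    exact ⟨Q, (Set.Finite.mem_toFinset _).1 hQ, hQ2⟩
  have hwitB : ∀ v, ∃ Q ∈ S v, (e Q : ℕ) = B v := by
    intro v
    have := Finset.max'_mem (F v) (hSne v)
    obtain ⟨Q, hQ, hQ2⟩ := Finset.mem_image.1 this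
    exact ⟨Q, (Set.Finite.mem_toFinset _).1 hQ, hQ2⟩
  have hconv : ∀ (v : V) (k : ℕ), ∀ Q1 ∈ S v, ∀ Q2 ∈ S v,
      (e Q1 : ℕ) ≤ k → k ≤ (e Q2 : ℕ) → ∀ R : MaxClique G, (e R : ℕ) = k → R ∈ S v := by
    intro v k Q1 h1 Q2 h2 hk1 hk2 R hR
    have hconn := T.subtree v
    rw [hTeq] at hconn
    obtain ⟨p⟩ := hconn.preconnected ⟨Q1, h1⟩ ⟨Q2, h2⟩
    obtain ⟨y, hy, hk⟩ := distGraph_walk_exists_index e p k hk1 hk2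
    have : (y : MaxClique G) = R := e.injective (Fin.ext (by rw [hk, hR]))
    rw [← this]; exact y.2
  refine ⟨fun v => (A v : ℝ), fun v => (B v : ℝ), fun v => ?_, fun u v => ?_⟩
  · show ((A v : ℕ) : ℝ) ≤ ((B v : ℕ) : ℝ)
    have : A v ≤ B v := Finset.min'_le _ _ (Finset.max'_mem _ _)
    exact_mod_cast this
  · constructor
    · intro h
      refine ⟨h.ne, ?_⟩
      have hcl : G.IsClique {u, v} := by
        intro x hx y hy hxy
        rcases hx with rfl | hx <;> rcases hy with rfl | hy
        · exact absurd rfl hxy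
        · rw [Set.mem_singleton_iff] at hy; subst hy; exact h
        · rw [Set.mem_singleton_iff] at hx; subst hx; exact h.symm
        · rw [Set.mem_singleton_iff] at hx hy; subst hx; subst hy; exact absurd rfl hxy
      obtain ⟨Q, hQ, hsub⟩ := exists_maxClique_superset hcl
      have hu : (⟨Q, hQ⟩ : MaxClique G) ∈ S u := hsub (Set.mem_insert _ _)
      have hv : (⟨Q, hQ⟩ : MaxClique G) ∈ S v := hsub (by
        exact Set.mem_insert_iff.2 (Or.inr rfl))
      refine ⟨((e (⟨Q, hQ⟩ : MaxClique G) : ℕ) : ℝ), ⟨?_, ?_⟩, ⟨?_, ?_⟩⟩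
      · show ((A u : ℕ) : ℝ) ≤ _
        exact_mod_cast (hbounds u _ hu).1
      · show _ ≤ ((B u : ℕ) : ℝ)
        exact_mod_cast (hbounds u _ hu).2
      · show ((A v : ℕ) : ℝ) ≤ _
        exact_mod_cast (hbounds v _ hv).1
      · show _ ≤ ((B v : ℕ) : ℝ)
        exact_mod_cast (hbounds v _ hv).2
    · rintro ⟨hne, t, ⟨htu1, htu2⟩, ⟨htv1, htv2⟩⟩
      have htu1 : ((A u : ℕ) : ℝ) ≤ t := htu1
      have htu2 : t ≤ ((B u : ℕ) : ℝ) := htu2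
      have htv1 : ((A v : ℕ) : ℝ) ≤ t := htv1
      have htv2 : t ≤ ((B v : ℕ) : ℝ) := htv2
      have hAuBv : A u ≤ B v := by exact_mod_cast le_trans htu1 htv2
      have hAvBu : A v ≤ B u := by exact_mod_cast le_trans htv1 htu2
      have hAuBu : A u ≤ B u := by exact_mod_cast le_trans htu1 htu2
      have hAvBv : A v ≤ B v := by exact_mod_cast le_trans htv1 htv2
      set k := max (A u) (A v) with hk
      obtain ⟨Qau, hQau, hkau⟩ := hwitA u
      obtain ⟨Qbu, hQbu, hkbu⟩ := hwitB u
      obtain ⟨Qav, hQav, hkav⟩ := hwitA v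
      obtain ⟨Qbv, hQbv, hkbv⟩ := hwitB v
      have hklt : k < Fintype.card (MaxClique G) := by
        have := (e Qbu).isLt
        omega
      set R : MaxClique G := e.symm ⟨k, hklt⟩ with hR
      have heR : (e R : ℕ) = k := by rw [hR, Equiv.apply_symm_apply]
      have hRu : R ∈ S u := hconv u k Qau hQau Qbu hQbu (by omega) (by omega) R heR
      have hRv : R ∈ S v := hconv v k Qav hQav Qbv hQbv (by omega) (by omega) R heR
      exact R.2.1 hRu hRv hne


end IGAux

/-- A graph is an interval graph if and only if it has a clique path, i.e. a clique
tree whose underlying tree is a path. -/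
theorem intervalGraph_iff_cliquePath [Fintype V] [Nonempty V] (G : SimpleGraph V) :
    IsIntervalGraph G ↔ ∃ T : CliqueTree G, CliqueTree.IsCliquePath G T := by
  constructor
  · rintro ⟨a, b, hab, hadj⟩
    exact IGAux.dir1 G a b hab hadj
  · rintro ⟨T, hT⟩
    exact IGAux.dir2 G T hT
end

section
/- Let G be a chordal graph, let T be a clique tree of G, and let z1, z2, z3 be three pairwise non-adjacent vertices forming an asteroidal triple. Then the minimal subtree of T connecting the subtrees T^{z1}, T^{z2}, T^{z3} has exactly three leaves; in particular, it is not a path. -/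
open SimpleGraph

variable {V : Type*}

namespace AT3
variable {α : Type*} {T : SimpleGraph α}

noncomputable def tp (hT : T.IsTree) (x y : α) : T.Walk x y :=
  (hT.existsUnique_path x y).exists.choose

lemma tp_isPath (hT : T.IsTree) (x y : α) : (tp hT x y).IsPath :=
  (hT.existsUnique_path x y).exists.choose_spec

lemma tp_unique (hT : T.IsTree) {x y : α} {p : T.Walk x y} (hp : p.IsPath) :
    p = tp hT x y :=
  ((hT.existsUnique_path x y).unique hp (tp_isPath hT x y))

lemma tp_support_subset (hT : T.IsTree) {x y : α} (w : T.Walk x y) :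
    (tp hT x y).support ⊆ w.support := by
  classical
  rw [← tp_unique hT w.bypass_isPath]
  exact w.support_bypass_subset

lemma tp_tri (hT : T.IsTree) {x y z : α} {a : α} (ha : a ∈ (tp hT x z).support) :
    a ∈ (tp hT x y).support ∨ a ∈ (tp hT y z).support := by
  have := tp_support_subset hT ((tp hT x y).append (tp hT y z)) ha
  rwa [Walk.mem_support_append_iff] at this

/-- From connectivity of the induced graph, the unique tree path between two
members of `S` stays in `S`. -/
lemma pc_of_connected (hT : T.IsTree) {S : Set α} (hS : (T.induce S).Connected)
    {x y : α} (hx : x ∈ S) (hy : y ∈ S) : ∀ a ∈ (tp hT x y).support, a ∈ S := by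
  obtain ⟨w⟩ := hS.preconnected ⟨x, hx⟩ ⟨y, hy⟩
  have hmap : ∀ a ∈ (w.map ⟨Subtype.val, fun h => by simpa using h⟩).support, a ∈ S := by
    intro a ha
    rw [Walk.support_map, List.mem_map] at ha
    obtain ⟨b, _, rfl⟩ := ha
    exact b.2
  intro a ha
  exact hmap a (tp_support_subset hT _ ha)

lemma reachable_induce {S : Set α} : ∀ {x y : α} (w : T.Walk x y)
    (hw : ∀ a ∈ w.support, a ∈ S),
    (T.induce S).Reachable ⟨x, hw x w.start_mem_support⟩ ⟨y, hw y w.end_mem_support⟩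
  | _, _, Walk.nil, _ => Reachable.refl _
  | _, _, @Walk.cons _ _ x v y h p, hw => by
    have hv : v ∈ S := hw v (by simp)
    have hx : x ∈ S := hw x (by simp)
    have h1 : (T.induce S).Adj ⟨x, hx⟩ ⟨v, hv⟩ := by simpa using h
    exact h1.reachable.trans (reachable_induce p (fun a ha => hw a (by simp [ha])))

lemma connected_induce (hT : T.IsTree) {S : Set α} (hS : S.Nonempty)
    (hpc : ∀ x ∈ S, ∀ y ∈ S, ∀ a ∈ (tp hT x y).support, a ∈ S) :
    (T.induce S).Connected := by
  rw [connected_iff]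
  refine ⟨fun a b => ?_, ⟨⟨hS.choose, hS.choose_spec⟩⟩⟩
  obtain ⟨x, hx⟩ := a
  obtain ⟨y, hy⟩ := b
  exact reachable_induce (tp hT x y) (hpc x hx y hy)


section WalkUtil
variable {x y m R : α}

lemma snd_adj {p : T.Walk x y} (h : x ≠ y) : T.Adj x (p.getVert 1) := by
  have hl : 0 < p.length := by
    rcases Nat.eq_zero_or_pos p.length with h0 | h0
    · exact absurd (Walk.eq_of_length_eq_zero h0) h
    · exact h0
  simpa [Walk.getVert_zero] using p.adj_getVert_succ hl

lemma getVert_one_mem_support (p : T.Walk x y) : p.getVert 1 ∈ p.support := by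
  rw [Walk.mem_support_iff_exists_getVert]
  rcases le_or_gt 1 p.length with h | h
  · exact ⟨1, rfl, h⟩
  · have h0 : p.length = 0 := by omega
    have hxy := Walk.eq_of_length_eq_zero (p := p) h0
    exact ⟨0, by rw [Walk.getVert_zero, Walk.getVert_of_length_le _ (by omega)]; exact hxy, by omega⟩

/-- the penultimate vertex -/
noncomputable def pen (p : T.Walk x y) : α := p.reverse.getVert 1

lemma pen_adj {p : T.Walk x y} (h : x ≠ y) : T.Adj (pen p) y :=
  (snd_adj (p := p.reverse) (Ne.symm h)).symm

lemma pen_mem_support (p : T.Walk x y) : pen p ∈ p.support := by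
  have := getVert_one_mem_support p.reverse
  rwa [Walk.support_reverse, List.mem_reverse] at this

lemma takeUntil_dropUntil_eq [DecidableEq α] {p : T.Walk x y} (hp : p.IsPath)
    (hm : m ∈ p.support) {a : α} (h1 : a ∈ (p.takeUntil m hm).support)
    (h2 : a ∈ (p.dropUntil m hm).support) : a = m := by
  by_contra hne
  have hspec := p.take_spec hm
  have hnd : ((p.takeUntil m hm).support ++ ((p.dropUntil m hm).support).tail).Nodup := by
    rw [← Walk.support_append, hspec]; exact hp.support_nodup
  have h2' : a ∈ ((p.dropUntil m hm).support).tail := by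
    have := (p.dropUntil m hm).support_eq_cons
    rw [this] at h2
    rcases List.mem_cons.1 h2 with h | h
    · exact absurd h hne
    · exact h
  exact (List.disjoint_of_nodup_append hnd h1 h2')

/-- in a path ending at `y`, any support vertex adjacent to `y` is the penultimate. -/
lemma eq_pen_of_adj (hT : T.IsTree) [DecidableEq α] {p : T.Walk x y} (hp : p.IsPath)
    (hR : R ∈ p.support) (hadj : T.Adj R y) : R = pen p := by
  have hRy : R ≠ y := hadj.ne
  have hLnot : y ∉ (p.takeUntil R hR).support := by
    intro hy
    exact hRy (takeUntil_dropUntil_eq hp hR hy (p.dropUntil R hR).end_mem_support).symm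
  set s : T.Walk x y := (p.takeUntil R hR).concat hadj with hs
  have hsrev : s.reverse = Walk.cons hadj.symm (p.takeUntil R hR).reverse := by
    rw [hs, Walk.reverse_concat]
  have hspath : s.reverse.IsPath := by
    rw [hsrev, Walk.cons_isPath_iff]
    exact ⟨(hp.takeUntil hR).reverse, by rwa [Walk.support_reverse, List.mem_reverse]⟩
  have h1 : s.reverse = tp hT y x := tp_unique hT hspath
  have h2 : p.reverse = tp hT y x := tp_unique hT hp.reverse
  have : s.reverse.getVert 1 = p.reverse.getVert 1 := by rw [h1, h2]
  rw [hsrev] at this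
  rw [pen, ← this, Walk.getVert_cons _ _ one_ne_zero, Nat.sub_self, Walk.getVert_zero]

/-- split a walk at the first vertex belonging to `P`. -/
lemma exists_first {P : Set α} : ∀ {x y : α} (q : T.Walk x y), y ∈ P →
    ∃ (m : α) (q1 : T.Walk x m) (q2 : T.Walk m y),
      q1.append q2 = q ∧ m ∈ P ∧ ∀ a ∈ q1.support, a ≠ m → a ∉ P
  | x, _, Walk.nil, hy => ⟨x, Walk.nil, Walk.nil, rfl, hy, by
      intro a ha hne; simp at ha; exact absurd ha hne⟩
  | x, y, @Walk.cons _ _ _ v _ h p, hy => by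
    by_cases hx : x ∈ P
    · exact ⟨x, Walk.nil, Walk.cons h p, rfl, hx, by
        intro a ha hne; simp at ha; exact absurd ha hne⟩
    · obtain ⟨m, q1, q2, hq, hm, hfirst⟩ := exists_first p hy
      refine ⟨m, Walk.cons h q1, q2, by rw [Walk.cons_append, hq], hm, ?_⟩
      intro a ha hne
      rcases List.mem_cons.1 (by simpa using ha) with h' | h'
      · subst h'; exact hx
      · exact hfirst a h' hne

end WalkUtil

/-- Median of three vertices in a tree: a common vertex of the three pairwise paths
which, if distinct from all three, has three distinct neighbors (one off the
`y z` path, two on it). -/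
lemma median (hT : T.IsTree) [DecidableEq α] (x y z : α) :
    ∃ m, m ∈ (tp hT x y).support ∧ m ∈ (tp hT y z).support ∧ m ∈ (tp hT x z).support ∧
      (m ≠ x → m ≠ y → m ≠ z → ∃ a b c, T.Adj m a ∧ T.Adj m b ∧ T.Adj m c ∧
        a ≠ b ∧ a ≠ c ∧ b ≠ c ∧ a ∈ (tp hT x y).support ∧ b ∈ (tp hT y z).support ∧
        c ∈ (tp hT y z).support) := by
  set q := tp hT x y with hq
  set p := tp hT y z with hp
  obtain ⟨m, q1, q2, hsplit, hmP, hfirst⟩ :=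
    exists_first (P := {a | a ∈ p.support}) q p.start_mem_support
  have hq1path : q1.IsPath := by
    have : (q1.append q2).IsPath := by rw [hsplit]; exact tp_isPath hT x y
    exact this.of_append_left
  have hmq : m ∈ q.support := by
    rw [← hsplit, Walk.mem_support_append_iff]; exact Or.inl q1.end_mem_support
  set r1 := p.takeUntil m hmP with hr1
  set r2 := p.dropUntil m hmP with hr2
  have hr2path : r2.IsPath := (tp_isPath hT y z).dropUntil hmP
  have hr1path : r1.IsPath := (tp_isPath hT y z).takeUntil hmP
  -- the concatenation q1 ++ r2 is a path from x to z
  have hdisj : ∀ a ∈ q1.support, a ∈ r2.support.tail → False := by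
    intro a ha hatail
    have haP : a ∈ p.support := (p.support_dropUntil_subset hmP) (List.mem_of_mem_tail hatail)
    have ham : a = m := by
      by_contra hne
      exact hfirst a ha hne haP
    subst ham
    have : r2.support.Nodup := hr2path.support_nodup
    rw [r2.support_eq_cons] at this
    exact (List.nodup_cons.1 this).1 hatail
  have hs : (q1.append r2).IsPath := by
    apply Walk.IsPath.mk'
    rw [Walk.support_append]
    apply List.Nodup.append hq1path.support_nodup
    · have : r2.support.Nodup := hr2path.support_nodup
      exact this.tail
    · intro a ha ha'
      exact hdisj a ha ha'
  have hmxz : m ∈ (tp hT x z).support := by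
    rw [← tp_unique hT hs, Walk.mem_support_append_iff]
    exact Or.inl q1.end_mem_support
  refine ⟨m, hmq, hmP, hmxz, ?_⟩
  intro hmx hmy hmz
  -- three neighbors
  have hq1nn : x ≠ m := hmx ∘ Eq.symm
  have hr1nn : y ≠ m := hmy ∘ Eq.symm
  set a := pen q1 with hA
  set b := pen r1 with hB
  set c := r2.getVert 1 with hC
  have hadjA : T.Adj a m := pen_adj hq1nn
  have hadjB : T.Adj b m := pen_adj hr1nn
  have hadjC : T.Adj m c := snd_adj hmz
  have haq1 : a ∈ q1.support := pen_mem_support q1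
  have hanp : a ∉ p.support := hfirst a haq1 hadjA.ne
  have hbp : b ∈ p.support := (p.support_takeUntil_subset hmP) (pen_mem_support r1)
  have hcp : c ∈ p.support := (p.support_dropUntil_subset hmP) (getVert_one_mem_support r2)
  have hbc : b ≠ c := by
    intro h
    have hbm : b ≠ m := hadjB.ne
    have : b ∈ r2.support.tail := by
      have hmem : b ∈ r2.support := by rw [h]; exact getVert_one_mem_support r2
      rw [r2.support_eq_cons] at hmem
      rcases List.mem_cons.1 hmem with h' | h'
      · exact absurd h' hbm
      · exact h'
    have hnd : (r1.support ++ r2.support.tail).Nodup := by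
      rw [← Walk.support_append, p.take_spec hmP]
      exact (tp_isPath hT y z).support_nodup
    exact (List.disjoint_of_nodup_append hnd (pen_mem_support r1) this)
  have haq : a ∈ q.support := by
    rw [← hsplit, Walk.mem_support_append_iff]; exact Or.inl haq1
  exact ⟨a, b, c, hadjA.symm, hadjB.symm, hadjC,
    fun h => hanp (h ▸ hbp), fun h => hanp (h ▸ hcp), hbc, haq, hbp, hcp⟩


lemma side_eq (hT : T.IsTree) [DecidableEq α] {m a L : α} (ha : T.Adj m a)
    (hmem : a ∈ (tp hT m L).support) : (tp hT m L).getVert 1 = a := by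
  have h1 : (Walk.cons ha Walk.nil : T.Walk m a).IsPath := by
    simp [Walk.cons_isPath_iff, ha.ne]
  have h2 := (tp_isPath hT m L).takeUntil hmem
  have heq : (tp hT m L).takeUntil a hmem = Walk.cons ha Walk.nil :=
    (tp_unique hT h2).trans (tp_unique hT h1).symm
  have hspec := (tp hT m L).take_spec hmem
  rw [heq] at hspec
  rw [← hspec, Walk.cons_append, Walk.nil_append, Walk.getVert_cons _ _ one_ne_zero, Nat.sub_self, Walk.getVert_zero]

lemma leaf_con (hT : T.IsTree) [DecidableEq α] [Finite α] {W : Set α}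
    (hpc : ∀ x ∈ W, ∀ y ∈ W, ∀ e ∈ (tp hT x y).support, e ∈ W)
    {m a : α} (hm : m ∈ W) (haW : a ∈ W) (ha : T.Adj m a) :
    ∃ L, IsLeafIn T W L ∧ a ∈ (tp hT m L).support := by
  classical
  set D := {R | R ∈ W ∧ a ∈ (tp hT m R).support} with hD
  have haD : a ∈ D := ⟨haW, (tp hT m a).end_mem_support⟩
  obtain ⟨L, hLD, hmax⟩ := Set.Finite.exists_maximalFor
    (fun R => (tp hT m R).length) D (Set.toFinite D) ⟨a, haD⟩
  obtain ⟨hLW, haL⟩ := hLD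
  have hLm : L ≠ m := by
    rintro rfl
    have hnil : (Walk.nil : T.Walk L L) = tp hT L L := tp_unique hT Walk.IsPath.nil
    rw [← hnil] at haL
    exact ha.ne' (by simpa using haL)
  have hmL : m ≠ L := Ne.symm hLm
  set pL := tp hT m L with hpL
  have hpen_adj : T.Adj (pen pL) L := pen_adj hmL
  have hpenW : pen pL ∈ W := hpc m hm L hLW _ (pen_mem_support pL)
  refine ⟨L, ⟨hLW, ⟨pen pL, ⟨hpenW, hpen_adj.symm⟩, ?_⟩⟩, haL⟩
  rintro R ⟨hRW, hadjLR⟩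
  by_cases hR : R ∈ pL.support
  · exact eq_pen_of_adj hT (tp_isPath hT m L) hR hadjLR.symm
  · exfalso
    set s := pL.concat hadjLR with hs
    have hspath : s.IsPath := by
      apply Walk.IsPath.mk'
      rw [hs, Walk.support_concat]
      refine List.Nodup.append (tp_isPath hT m L).support_nodup (List.nodup_singleton R) ?_
      intro t ht ht'
      rw [List.mem_singleton] at ht'
      subst ht'
      exact hR ht
    have hseq : s = tp hT m R := tp_unique hT hspath
    have hRD : R ∈ D := ⟨hRW, by
      rw [← hseq, hs, Walk.support_concat]
      exact List.mem_append_left _ haL⟩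
    have hlen : (tp hT m L).length ≤ (tp hT m R).length := by
      rw [← hseq, hs, Walk.length_concat, hpL]
      omega
    have : (tp hT m R).length ≤ (tp hT m L).length := hmax (j := R) hRD hlen
    rw [← hseq, hs, Walk.length_concat, hpL] at this
    omega


section Graph
variable {V : Type*} [Fintype V] {G : SimpleGraph V}

lemma exists_maxClique_superset (G : SimpleGraph V) {s : Set V} (hs : G.IsClique s) :
    ∃ Q : MaxClique G, s ⊆ Q.1 := by
  classical
  set A : Set (Finset V) := {F | G.IsClique (↑F : Set V) ∧ s ⊆ ↑F} with hA
  have hAne : A.Nonempty := ⟨s.toFinset, by simpa [Set.coe_toFinset] using hs, by simp⟩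
  obtain ⟨F, hF, hmax⟩ := Set.Finite.exists_maximalFor
    (fun F : Finset V => F.card) A (Set.toFinite A) hAne
  refine ⟨⟨(↑F : Set V), hF.1, ?_⟩, hF.2⟩
  intro R hR hFR
  have hRfin : R.Finite := Set.toFinite R
  have hF'A : hRfin.toFinset ∈ A := ⟨by rw [Set.Finite.coe_toFinset]; exact hR,
    subset_trans hF.2 (by rw [Set.Finite.coe_toFinset]; exact hFR)⟩
  have hsub : F ⊆ hRfin.toFinset := by
    intro x hx
    rw [Set.Finite.mem_toFinset]
    exact hFR hx
  have hcard := hmax (j := hRfin.toFinset) hF'A (Finset.card_le_card hsub)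
  have hFeq : F = hRfin.toFinset := Finset.eq_of_subset_of_card_le hsub hcard
  rw [hFeq, Set.Finite.coe_toFinset]

lemma subtree_pc (T : CliqueTree G) {v : V} {C D : MaxClique G} (hC : v ∈ C.1) (hD : v ∈ D.1) :
    ∀ E ∈ (tp T.isTree C D).support, v ∈ E.1 := fun E hE =>
  pc_of_connected T.isTree (T.subtree v) hC hD E hE

lemma sep (T : CliqueTree G) (Q : MaxClique G) :
    ∀ {u w : V} (p : G.Walk u w), (∀ x ∈ p.support, x ∉ Q.1) →
      ∀ (C D : MaxClique G), u ∈ C.1 → w ∈ D.1 → Q ∉ (tp T.isTree C D).support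
  | u, _, Walk.nil, hp, C, D, hC, hD => fun hQ => hp u (by simp) (subtree_pc T hC hD Q hQ)
  | u, w, @Walk.cons _ _ _ x _ h p, hp, C, D, hC, hD => by
    obtain ⟨E, hE⟩ := exists_maxClique_superset G (SimpleGraph.isClique_pair.2 fun _ => h)
    have huE : u ∈ E.1 := hE (by simp)
    have hxE : x ∈ E.1 := hE (by simp)
    intro hQ
    have h1 : Q ∉ (tp T.isTree C E).support := fun hQ' =>
      hp u (by simp) (subtree_pc T hC huE Q hQ')
    have h2 : Q ∉ (tp T.isTree E D).support :=
      sep T Q p (fun y hy => hp y (by simp [hy])) E D hxE hD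
    rcases tp_tri T.isTree (y := E) hQ with h' | h'
    exacts [h1 h', h2 h']

end Graph
end AT3

/-- If `z1, z2, z3` is an asteroidal triple of a chordal graph `G`, then for every
clique tree `T` of `G` the minimal subtree `T(z1,z2,z3)` connecting `T^{z1}`,
`T^{z2}`, `T^{z3}` has exactly three leaves; in particular it is not a path. -/
theorem asteroidal_triple_three_leaves [Fintype V] (G : SimpleGraph V)
    (hG : IsChordal G) (T : CliqueTree G) (z1 z2 z3 : V)
    (hAT : IsAsteroidalTriple G z1 z2 z3) (W : Set (MaxClique G))
    (hW : IsConnector3 G T z1 z2 z3 W)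
    (hmin : ∀ W', W' ⊂ W → ¬ IsConnector3 G T z1 z2 z3 W') :
    (∃ L1 L2 L3 : MaxClique G, L1 ≠ L2 ∧ L1 ≠ L3 ∧ L2 ≠ L3 ∧
      IsLeafIn T.tree W L1 ∧ IsLeafIn T.tree W L2 ∧ IsLeafIn T.tree W L3 ∧
      ∀ Q, IsLeafIn T.tree W Q → Q = L1 ∨ Q = L2 ∨ Q = L3) ∧
    ¬ (∀ Q ∈ W, ∀ a ∈ W, ∀ b ∈ W, ∀ c ∈ W,
        T.tree.Adj Q a → T.tree.Adj Q b → T.tree.Adj Q c → a = b ∨ a = c ∨ b = c) := by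
  classical
  open AT3 in
  obtain ⟨hne12, hne23, hne13, hnadj12, hnadj23, hnadj13, ⟨p12, hp12⟩, ⟨p23, hp23⟩,
    ⟨p13, hp13⟩⟩ := hAT
  obtain ⟨hWc, ⟨Q1, hQ1W, hz1⟩, ⟨Q2, hQ2W, hz2⟩, ⟨Q3, hQ3W, hz3⟩⟩ := hW
  have hT := T.isTree
  have hpcW : ∀ x ∈ W, ∀ y ∈ W, ∀ e ∈ (AT3.tp hT x y).support, e ∈ W :=
    fun x hx y hy => AT3.pc_of_connected hT hWc hx hy
  have hpair : ∀ (u v' : V), u ≠ v' → ¬ G.Adj u v' →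
      ∀ Q : MaxClique G, u ∈ Q.1 → v' ∈ Q.1 → False :=
    fun u v' hne hnadj Q hu hv => hnadj (Q.2.1 hu hv hne)
  have hQ12 : Q1 ≠ Q2 := fun h => hpair z1 z2 hne12 hnadj12 Q2 (h ▸ hz1) hz2
  -- Part A : the induced subtree on W is not a path
  have hnopath : ¬ (∀ Q ∈ W, ∀ a ∈ W, ∀ b ∈ W, ∀ c ∈ W,
      T.tree.Adj Q a → T.tree.Adj Q b → T.tree.Adj Q c → a = b ∨ a = c ∨ b = c) := by
    intro Hp
    obtain ⟨m, hm1, hm2, hm3, hbranch⟩ := AT3.median hT Q1 Q2 Q3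
    have hsup12 := hpcW Q1 hQ1W Q2 hQ2W
    have hsup23 := hpcW Q2 hQ2W Q3 hQ3W
    by_cases hc1 : m = Q1
    · subst hc1
      refine AT3.sep T m p23 ?_ Q2 Q3 hz2 hz3 hm2
      intro x hx hxQ
      obtain ⟨hxne, hxnadj⟩ := hp23 x hx
      exact hxnadj (m.2.1 hz1 hxQ (Ne.symm hxne))
    by_cases hc2 : m = Q2
    · subst hc2
      refine AT3.sep T m p13 ?_ Q1 Q3 hz1 hz3 hm3
      intro x hx hxQ
      obtain ⟨hxne, hxnadj⟩ := hp13 x hx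
      exact hxnadj (m.2.1 hz2 hxQ (Ne.symm hxne))
    by_cases hc3 : m = Q3
    · subst hc3
      refine AT3.sep T m p12 ?_ Q1 Q2 hz1 hz2 hm1
      intro x hx hxQ
      obtain ⟨hxne, hxnadj⟩ := hp12 x hx
      exact hxnadj (m.2.1 hz3 hxQ (Ne.symm hxne))
    obtain ⟨a, b, c, hma, hmb, hmc, hab, hac, hbc, ha12, hb23, hc23⟩ := hbranch hc1 hc2 hc3
    have hmW : m ∈ W := hsup12 m hm1
    rcases Hp m hmW a (hsup12 a ha12) b (hsup23 b hb23) c (hsup23 c hc23) hma hmb hmc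
      with h | h | h
    exacts [hab h, hac h, hbc h]
  have hnopath' := hnopath
  -- index the three vertices
  set z : Fin 3 → V := ![z1, z2, z3] with hzdef
  have hzpair : ∀ i j : Fin 3, i ≠ j → ∀ Q : MaxClique G, z i ∈ Q.1 → z j ∈ Q.1 → False := by
    intro i j hij Q hi hj
    fin_cases i <;> fin_cases j <;>
      first
        | exact hij rfl
        | exact hpair z1 z2 hne12 hnadj12 Q hi hj
        | exact hpair z2 z1 (Ne.symm hne12) (fun h => hnadj12 h.symm) Q hi hj
        | exact hpair z2 z3 hne23 hnadj23 Q hi hj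
        | exact hpair z3 z2 (Ne.symm hne23) (fun h => hnadj23 h.symm) Q hi hj
        | exact hpair z1 z3 hne13 hnadj13 Q hi hj
        | exact hpair z3 z1 (Ne.symm hne13) (fun h => hnadj13 h.symm) Q hi hj
  have hWzi : ∀ i : Fin 3, ∃ Q ∈ W, z i ∈ Q.1 := by
    intro i; fin_cases i
    exacts [⟨Q1, hQ1W, hz1⟩, ⟨Q2, hQ2W, hz2⟩, ⟨Q3, hQ3W, hz3⟩]
  -- Part B : every leaf of W is the unique element of W containing some z i
  have hBleaf : ∀ L, IsLeafIn T.tree W L →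
      ∃ i : Fin 3, z i ∈ L.1 ∧ ∀ Q ∈ W, z i ∈ Q.1 → Q = L := by
    intro L hL
    obtain ⟨hLW, R0, hR0, hR0u⟩ := hL
    set W' := W \ {L} with hW'def
    have hW'ss : W' ⊂ W := by
      rw [Set.ssubset_def]
      exact ⟨Set.diff_subset, fun h => (h hLW).2 rfl⟩
    have hW'ne : W'.Nonempty := by
      by_cases h : Q1 = L
      · refine ⟨Q2, hQ2W, ?_⟩
        simp only [Set.mem_singleton_iff]
        rw [← h]
        exact Ne.symm hQ12
      · exact ⟨Q1, hQ1W, by simpa only [Set.mem_singleton_iff] using h⟩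
    have hW'conn : (T.tree.induce W').Connected := by
      apply AT3.connected_induce hT hW'ne
      intro x hx y hy e he
      have heW : e ∈ W := hpcW x hx.1 y hy.1 e he
      refine ⟨heW, ?_⟩
      simp only [Set.mem_singleton_iff]
      intro hEL
      subst hEL
      have hxL : x ≠ e := fun h => hx.2 (Set.mem_singleton_iff.2 h)
      have hyL : y ≠ e := fun h => hy.2 (Set.mem_singleton_iff.2 h)
      set P := AT3.tp hT x y with hP
      have hppath : P.IsPath := AT3.tp_isPath hT x y
      set r1 := P.takeUntil e he with hr1
      set r2 := P.dropUntil e he with hr2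
      have hb_adj : T.tree.Adj (AT3.pen r1) e := AT3.pen_adj hxL
      have hc_adj : T.tree.Adj e (r2.getVert 1) := AT3.snd_adj (Ne.symm hyL)
      have hbW : AT3.pen r1 ∈ W :=
        hpcW x hx.1 y hy.1 _ ((P.support_takeUntil_subset he) (AT3.pen_mem_support r1))
      have hcW : r2.getVert 1 ∈ W :=
        hpcW x hx.1 y hy.1 _ ((P.support_dropUntil_subset he) (AT3.getVert_one_mem_support r2))
      have hbR : AT3.pen r1 = R0 := hR0u _ ⟨hbW, hb_adj.symm⟩
      have hcR : r2.getVert 1 = R0 := hR0u _ ⟨hcW, hc_adj⟩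
      have hpe : AT3.pen r1 = e := by
        apply AT3.takeUntil_dropUntil_eq hppath he (AT3.pen_mem_support r1)
        rw [hbR, ← hcR]
        exact AT3.getVert_one_mem_support r2
      exact hb_adj.ne hpe
    have hnc := hmin W' hW'ss
    have hfail : ¬((∃ Q ∈ W', z1 ∈ Q.1) ∧ (∃ Q ∈ W', z2 ∈ Q.1) ∧ (∃ Q ∈ W', z3 ∈ Q.1)) :=
      fun ⟨h1, h2, h3⟩ => hnc ⟨hW'conn, h1, h2, h3⟩
    have hidx : ∃ i : Fin 3, ∀ Q ∈ W', z i ∉ Q.1 := by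
      by_contra hcon
      push_neg at hcon
      exact hfail ⟨hcon 0, hcon 1, hcon 2⟩
    obtain ⟨i, hi⟩ := hidx
    obtain ⟨Qi, hQiW, hQiz⟩ := hWzi i
    have hQiL : Qi = L := by
      by_contra h
      exact hi Qi ⟨hQiW, fun hm => h (Set.mem_singleton_iff.1 hm)⟩ hQiz
    refine ⟨i, hQiL ▸ hQiz, ?_⟩
    intro Q hQW hQz
    by_contra h
    exact hi Q ⟨hQW, fun hm => h (Set.mem_singleton_iff.1 hm)⟩ hQz
  -- construct the three leaves
  push_neg at hnopath
  obtain ⟨m, hmW, a, haW, b, hbW, c, hcW, hma, hmb, hmc, hab, hac, hbc⟩ := hnopath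
  obtain ⟨La, hLa, htA⟩ := AT3.leaf_con hT hpcW hmW haW hma
  obtain ⟨Lb, hLb, htB⟩ := AT3.leaf_con hT hpcW hmW hbW hmb
  obtain ⟨Lc, hLc, htC⟩ := AT3.leaf_con hT hpcW hmW hcW hmc
  have hdist : ∀ {a' b' : MaxClique G} {L L' : MaxClique G}, T.tree.Adj m a' →
      T.tree.Adj m b' → a' ≠ b' → a' ∈ (AT3.tp hT m L).support →
      b' ∈ (AT3.tp hT m L').support → L ≠ L' := by
    intro a' b' L L' h1 h2 hne h3 h4 heq
    subst heq
    exact hne ((AT3.side_eq hT h1 h3).symm.trans (AT3.side_eq hT h2 h4))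
  have hLaLb : La ≠ Lb := hdist hma hmb hab htA htB
  have hLaLc : La ≠ Lc := hdist hma hmc hac htA htC
  have hLbLc : Lb ≠ Lc := hdist hmb hmc hbc htB htC
  obtain ⟨iA, hiA1, hiA2⟩ := hBleaf La hLa
  obtain ⟨iB, hiB1, hiB2⟩ := hBleaf Lb hLb
  obtain ⟨iC, hiC1, hiC2⟩ := hBleaf Lc hLc
  have hAB : iA ≠ iB := fun h => hLaLb (hiA2 Lb hLb.1 (h ▸ hiB1)).symm
  have hAC : iA ≠ iC := fun h => hLaLc (hiA2 Lc hLc.1 (h ▸ hiC1)).symm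
  have hBC : iB ≠ iC := fun h => hLbLc (hiB2 Lc hLc.1 (h ▸ hiC1)).symm
  have hcover : ∀ j : Fin 3, j = iA ∨ j = iB ∨ j = iC := by
    intro j
    have h1 : iA.1 ≠ iB.1 := fun h => hAB (Fin.ext h)
    have h2 : iA.1 ≠ iC.1 := fun h => hAC (Fin.ext h)
    have h3 : iB.1 ≠ iC.1 := fun h => hBC (Fin.ext h)
    have h4 := j.isLt
    have h5 := iA.isLt
    have h6 := iB.isLt
    have h7 := iC.isLt
    have h8 : j.1 = iA.1 ∨ j.1 = iB.1 ∨ j.1 = iC.1 := by omega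
    rcases h8 with h | h | h
    exacts [Or.inl (Fin.ext h), Or.inr (Or.inl (Fin.ext h)), Or.inr (Or.inr (Fin.ext h))]
  have hM : ∀ j : Fin 3, ∃ L, IsLeafIn T.tree W L ∧ z j ∈ L.1 ∧
      ∀ Q ∈ W, z j ∈ Q.1 → Q = L := by
    intro j
    rcases hcover j with rfl | rfl | rfl
    exacts [⟨La, hLa, hiA1, hiA2⟩, ⟨Lb, hLb, hiB1, hiB2⟩, ⟨Lc, hLc, hiC1, hiC2⟩]
  choose M hM1 hM2 hM3 using hM
  have hMne : ∀ i j : Fin 3, i ≠ j → M i ≠ M j := by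
    intro i j hij h
    exact hzpair i j hij (M i) (hM2 i) (by rw [h]; exact hM2 j)
  have h012 : ∀ j : Fin 3, j = 0 ∨ j = 1 ∨ j = 2 := by decide
  refine ⟨⟨M 0, M 1, M 2, hMne 0 1 (by decide), hMne 0 2 (by decide), hMne 1 2 (by decide),
    hM1 0, hM1 1, hM1 2, ?_⟩, hnopath'⟩
  intro Q hQ
  obtain ⟨i, hzi, huniq⟩ := hBleaf Q hQ
  have hMiQ : M i = Q := huniq (M i) (hM1 i).1 (hM2 i)
  rcases h012 i with rfl | rfl | rfl
  exacts [Or.inl hMiQ.symm, Or.inr (Or.inl hMiQ.symm), Or.inr (Or.inr hMiQ.symm)]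
end

section
/- Let G be a chordal graph with a clique tree T, let z1, z2, z3 be pairwise non-adjacent vertices, and let Q1, Q2, Q3 be maximal cliques with zi ∈ Qi appearing in this order along a path in T. Then every path in G from z1 to z3 contains a vertex of Q2; in particular it contains a neighbor of z2. -/
open SimpleGraph

variable {V : Type*}

lemma exists_maxClique_superset [Fintype V] (G : SimpleGraph V) {s : Set V}
    (hs : G.IsClique s) : ∃ Q : Set V, IsMaxClique G Q ∧ s ⊆ Q := by
  classical
  have hfin : ({R : Set V | G.IsClique R ∧ s ⊆ R}).Finite := Set.toFinite _
  obtain ⟨Q, hQ, hmax⟩ := hfin.exists_maximal ⟨s, hs, subset_rfl⟩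
  refine ⟨Q, ⟨hQ.1, ?_⟩, hQ.2⟩
  intro R hR hQR
  exact subset_antisymm hQR (hmax ⟨hR, hQ.2.trans hQR⟩ hQR)

lemma walk_in_subtree {G : SimpleGraph V} (T : CliqueTree G) {v : V}
    {Qa Qb : MaxClique G} (ha : v ∈ Qa.1) (hb : v ∈ Qb.1) :
    ∃ w : T.tree.Walk Qa Qb, ∀ Q ∈ w.support, v ∈ Q.1 := by
  obtain ⟨w'⟩ := (T.subtree v) ⟨Qa, ha⟩ ⟨Qb, hb⟩
  refine ⟨w'.map (SimpleGraph.Embedding.induce _).toHom, ?_⟩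
  intro Q hQ
  erw [SimpleGraph.Walk.support_map, List.mem_map] at hQ
  obtain ⟨q, _, rfl⟩ := hQ
  exact q.2

lemma walk_avoiding [Fintype V] {G : SimpleGraph V} (T : CliqueTree G)
    (Q2 : MaxClique G) : ∀ {a b : V} (p : G.Walk a b),
    (∀ x ∈ p.support, x ∉ Q2.1) →
    ∀ (Qa Qb : MaxClique G), a ∈ Qa.1 → b ∈ Qb.1 →
    ∃ w : T.tree.Walk Qa Qb, Q2 ∉ w.support := by
  intro a b p
  induction p with
  | nil =>
    intro hp Qa Qb ha hb
    obtain ⟨w, hw⟩ := walk_in_subtree T ha hb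
    exact ⟨w, fun h => hp _ (by simp) (hw _ h)⟩
  | @cons a c b hac q ih =>
    intro hp Qa Qb ha hb
    have hcl : G.IsClique ({a, c} : Set V) := by
      intro x hx y hy hxy
      rcases hx with rfl | rfl <;> rcases hy with rfl | rfl <;>
        first | exact absurd rfl hxy | exact hac | exact hac.symm
    obtain ⟨R, hR, hsub⟩ := exists_maxClique_superset G hcl
    have haR : a ∈ R := hsub (by simp)
    have hcR : c ∈ R := hsub (by simp)
    obtain ⟨w1, hw1⟩ := walk_in_subtree T ha haR (Qb := ⟨R, hR⟩)
    obtain ⟨w2, hw2⟩ := ih (fun x hx => hp x (by simp [hx])) ⟨R, hR⟩ Qb hcR hb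
    refine ⟨w1.append w2, ?_⟩
    rw [SimpleGraph.Walk.mem_support_append_iff]
    rintro (h | h)
    · exact hp a (by simp) (hw1 _ h)
    · exact hw2 h

/-- If `Q1, Q2, Q3` are maximal cliques containing the pairwise non-adjacent vertices
`z1, z2, z3` and `Q2` lies on the tree path between `Q1` and `Q3` in a clique tree,
then every walk from `z1` to `z3` in `G` meets `Q2`, and in particular meets the
closed neighborhood of `z2`. -/
theorem middle_clique_separates [Fintype V] (G : SimpleGraph V) (hG : IsChordal G)
    (T : CliqueTree G) (z1 z2 z3 : V)
    (h12 : z1 ≠ z2) (h23 : z2 ≠ z3) (h13 : z1 ≠ z3)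
    (ha12 : ¬ G.Adj z1 z2) (ha23 : ¬ G.Adj z2 z3) (ha13 : ¬ G.Adj z1 z3)
    (Q1 Q2 Q3 : MaxClique G) (hz1 : z1 ∈ Q1.1) (hz2 : z2 ∈ Q2.1) (hz3 : z3 ∈ Q3.1)
    (horder : ∀ p : T.tree.Walk Q1 Q3, Q2 ∈ p.support) :
    ∀ p : G.Walk z1 z3,
      (∃ x ∈ p.support, x ∈ Q2.1) ∧ (∃ x ∈ p.support, x = z2 ∨ G.Adj z2 x) := by
  intro p
  have key : ∃ x ∈ p.support, x ∈ Q2.1 := by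
    by_contra h
    push_neg at h
    obtain ⟨w, hw⟩ := walk_avoiding T Q2 p h Q1 Q3 hz1 hz3
    exact hw (horder w)
  refine ⟨key, ?_⟩
  obtain ⟨x, hx, hxQ⟩ := key
  refine ⟨x, hx, ?_⟩
  by_cases hxz : x = z2
  · exact Or.inl hxz
  · exact Or.inr (Q2.2.1 hz2 hxQ (fun hh => hxz hh.symm))
end

section
/- If a chordal graph G is an interval graph, then G contains no asteroidal triple. -/
open SimpleGraph

variable {V : Type*}

/-- A chordal graph that is an interval graph contains no asteroidal triple. -/
theorem interval_no_asteroidal_triple [Fintype V] (G : SimpleGraph V)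
    (hG : IsChordal G) (hI : IsIntervalGraph G) :
    ∀ a b c : V, ¬ IsAsteroidalTriple G a b c := by
  obtain ⟨lo, hi, hle, hadj⟩ := hI
  have sep : ∀ u v : V, u ≠ v → ¬ G.Adj u v → hi u < lo v ∨ hi v < lo u := by
    intro u v hne hna
    by_contra h
    push_neg at h
    exact hna ((hadj u v).2 ⟨hne, max (lo u) (lo v),
      ⟨le_max_left _ _, max_le (hle u) h.1⟩, ⟨le_max_right _ _, max_le h.2 (hle v)⟩⟩)
  have key : ∀ (m x y : V) (p : G.Walk x y), hi x < lo m → hi m < lo y →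
      (∀ z ∈ p.support, z ≠ m ∧ ¬ G.Adj m z) → False := by
    intro m x y p
    induction p with
    | nil =>
      intro h1 h2 _
      exact absurd ((h1.trans_le (hle m)).trans h2) (not_lt.2 (hle _))
    | @cons x w y h p ih =>
      intro h1 h2 hav
      obtain ⟨t, ⟨_, ht2⟩, ⟨ht3, _⟩⟩ := ((hadj x w).1 h).2
      obtain ⟨hwm, hwa⟩ := hav w (by simp)
      have hav' : ∀ z ∈ p.support, z ≠ m ∧ ¬ G.Adj m z := by
        intro z hz
        exact hav z (by simp [hz])
      rcases sep m w (fun e => hwm e.symm) hwa with hc | hc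
      · have := hle m
        linarith
      · exact ih hc h2 hav'
  intro a b c hAT
  obtain ⟨hab, hbc, hac, nab, nbc, nac, ⟨pab, hpab⟩, ⟨pbc, hpbc⟩, ⟨pac, hpac⟩⟩ := hAT
  have hpbc' : ∀ z ∈ pbc.reverse.support, z ≠ a ∧ ¬ G.Adj a z := by
    intro z hz; exact hpbc z (by simpa using hz)
  have hpab' : ∀ z ∈ pab.reverse.support, z ≠ c ∧ ¬ G.Adj c z := by
    intro z hz; exact hpab z (by simpa using hz)
  have hpac' : ∀ z ∈ pac.reverse.support, z ≠ b ∧ ¬ G.Adj b z := by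
    intro z hz; exact hpac z (by simpa using hz)
  rcases sep a b hab nab with s1 | s1 <;> rcases sep b c hbc nbc with s2 | s2
  · exact key b a c pac s1 s2 hpac
  · rcases sep a c hac nac with s3 | s3
    · exact key c a b pab s3 s2 hpab
    · exact key a c b pbc.reverse s3 s1 hpbc'
  · rcases sep a c hac nac with s3 | s3
    · exact key a b c pbc s1 s3 hpbc
    · exact key c b a pab.reverse s2 s3 hpab'
  · exact key b c a pac.reverse s2 s1 hpac'
end

section
/- Let G be a chordal graph with clique tree T, let u, v be non-adjacent vertices, and suppose every edge label of the tree path between a clique containing u and a clique containing v contains a vertex not adjacent to z. Then there is a path in G from u to v avoiding the closed neighborhood of z. -/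
open SimpleGraph

variable {V : Type*}

private lemma aux_walk {G : SimpleGraph V} (T : CliqueTree G) (z v : V) :
    ∀ {Q R : MaxClique G} (p : T.tree.Walk Q R),
      (∀ A B : MaxClique G, s(A, B) ∈ p.edges →
        ∃ x ∈ A.1 ∩ B.1, x ≠ z ∧ ¬ G.Adj z x) →
      ∀ u, u ∈ Q.1 → u ≠ z → ¬ G.Adj z u → v ∈ R.1 → v ≠ z → ¬ G.Adj z v →
      ∃ w : G.Walk u v, ∀ x ∈ w.support, x ≠ z ∧ ¬ G.Adj z x := by
  intro Q R p
  induction p with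
  | @nil Q =>
    intro _ u hu huz hazu hv hvz hazv
    rcases eq_or_ne u v with rfl | hne
    · exact ⟨SimpleGraph.Walk.nil, by simp [huz, hazu]⟩
    · have hadj : G.Adj u v := Q.2.1 hu hv hne
      exact ⟨hadj.toWalk, by
        intro x hx
        simp only [SimpleGraph.Walk.support_cons, SimpleGraph.Walk.support_nil,
          List.mem_cons, List.mem_singleton] at hx
        rcases hx with rfl | hx
        · exact ⟨huz, hazu⟩
        · rcases hx with rfl | h
          · exact ⟨hvz, hazv⟩
          · cases h⟩
  | @cons Q Q' R h q ih =>
    intro hlab u hu huz hazu hv hvz hazv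
    obtain ⟨x, hx, hxz, hazx⟩ := hlab Q Q' (by simp)
    have hlab' : ∀ A B : MaxClique G, s(A, B) ∈ q.edges →
        ∃ x ∈ A.1 ∩ B.1, x ≠ z ∧ ¬ G.Adj z x := by
      intro A B hAB; exact hlab A B (by simp [hAB])
    obtain ⟨w, hw⟩ := ih hlab' x hx.2 hxz hazx hv hvz hazv
    rcases eq_or_ne u x with rfl | hne
    · exact ⟨w, hw⟩
    · have hadj : G.Adj u x := Q.2.1 hu hx.1 hne
      refine ⟨w.cons hadj, ?_⟩
      intro y hy
      simp only [SimpleGraph.Walk.support_cons, List.mem_cons] at hy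
      rcases hy with rfl | hy
      · exact ⟨huz, hazu⟩
      · exact hw y hy

/-- If every edge label of the tree path between a clique containing `u` and a clique
containing `v` contains a vertex outside the closed neighborhood of `z` (and `u, v`
are themselves outside it), then there is a walk from `u` to `v` avoiding the closed
neighborhood of `z`. -/
theorem path_avoiding_neighborhood [Fintype V] (G : SimpleGraph V) (hG : IsChordal G)
    (T : CliqueTree G) (u v z : V) (huv : u ≠ v) (hadj : ¬ G.Adj u v)
    (hzu : z ≠ u) (hzv : z ≠ v) (hazu : ¬ G.Adj z u) (hazv : ¬ G.Adj z v)
    (Qu Qv : MaxClique G) (hu : u ∈ Qu.1) (hv : v ∈ Qv.1)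
    (hlab : ∀ p : T.tree.Walk Qu Qv, p.IsPath →
      ∀ Q R : MaxClique G, s(Q, R) ∈ p.edges →
        ∃ x ∈ Q.1 ∩ R.1, x ≠ z ∧ ¬ G.Adj z x) :
    ∃ p : G.Walk u v, ∀ x ∈ p.support, x ≠ z ∧ ¬ G.Adj z x := by
  classical
  obtain ⟨w⟩ := T.isTree.isConnected Qu Qv
  have hp := w.toPath.2
  exact aux_walk T z v w.toPath.1 (hlab w.toPath.1 hp) u hu hzu.symm hazu hv hzv.symm hazv
end
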